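/- arXiv:2205.09432 — 2 statements merged into one kernel-verified Lean document; each statement's English description precedes it below -/
import Mathlib

section
/- Let K₁, …, K_w be smooth operator fields on an open set U ⊆ ℝⁿ which commute pairwise (K_α(x) ∘ K_β(x) = K_β(x) ∘ K_α(x) for all x ∈ U and all α, β), each satisfying the spectral regularity assumption, and each satisfying τ⁽ˡ⁾_{K_α}(X,Y)(x) = 0 for all smooth vector fields X, Y and all x ∈ U, for a common integer l ≥ 1. For each α choose one generalized eigen-distribution D^{(α)} of K_α, i.e. D^{(α)}(x) = ker((K_α(x) − λ^{(α)}(x)·Id)^{ρ^{(α)}}) for one of the eigenvalue functions λ^{(α)} of K_α with Riesz index ρ^{(α)}. Then the intersection distribution x ↦ D^{(1)}(x) ∩ ⋯ ∩ D^{(w)}(x) is involutive. -/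
noncomputable section

/-- Points of ℝⁿ, modeled as `Fin n → ℝ`. -/
abbrev Vec (n : ℕ) := Fin n → ℝ

/-- Vector fields on (an open subset of) ℝⁿ. -/
abbrev VF (n : ℕ) := Vec n → Vec n

/-- Operator fields: smooth (1,1)-tensor fields, i.e. maps U → (ℝⁿ →L[ℝ] ℝⁿ). -/
abbrev OpField (n : ℕ) := Vec n → (Vec n →L[ℝ] Vec n)

/-- Lie bracket of vector fields: [V,W](x) = DW(x)(V(x)) − DV(x)(W(x)). -/
noncomputable def lieBracket {n : ℕ} (V W : VF n) : VF n :=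
  fun x => fderiv ℝ W x (V x) - fderiv ℝ V x (W x)

/-- Action of an operator field on a vector field: (A V)(x) = A(x)(V(x)). -/
noncomputable def opApp {n : ℕ} (A : OpField n) (V : VF n) : VF n := fun x => A x (V x)

/-- Generalized Nijenhuis torsion of level m:
τ⁽⁰⁾_A(V,W) = [V,W] and
τ⁽ᵐ⁾_A(V,W) = A²τ⁽ᵐ⁻¹⁾_A(V,W) + τ⁽ᵐ⁻¹⁾_A(AV,AW) − A(τ⁽ᵐ⁻¹⁾_A(V,AW) + τ⁽ᵐ⁻¹⁾_A(AV,W)).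
Level 1 is the Nijenhuis torsion, level 2 the Haantjes torsion. -/
noncomputable def genTorsion {n : ℕ} (A : OpField n) : ℕ → VF n → VF n → VF n
  | 0, V, W => lieBracket V W
  | (m+1), V, W => fun x =>
      A x (A x (genTorsion A m V W x))
      + genTorsion A m (opApp A V) (opApp A W) x
      - A x (genTorsion A m V (opApp A W) x + genTorsion A m (opApp A V) W x)

/-- The generalized eigen-distribution `ker ((A(x) − λ(x)·Id)^ρ)`. -/
noncomputable def eigenDist {n : ℕ} (A : OpField n) (lam : Vec n → ℝ) (ρ : ℕ)
    (x : Vec n) : Submodule ℝ (Vec n) :=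
  LinearMap.ker (((A x - lam x • 1) ^ ρ : Vec n →L[ℝ] Vec n) : Vec n →ₗ[ℝ] Vec n)

/-- Spectral regularity of an operator field `A` on `U`: smooth pointwise-distinct
eigenvalue functions `lam i`, Riesz indices `ρ i ≥ 1` with
`ker (A−λᵢ)^{ρᵢ} = ker (A−λᵢ)^{ρᵢ+1}`, the dimension of each generalized
eigen-distribution constantly `r i`, and ℝⁿ the internal direct sum of them. -/
structure SpectralRegular {n : ℕ} (U : Set (Vec n)) (A : OpField n)
    (s : ℕ) (lam : Fin s → Vec n → ℝ) (ρ : Fin s → ℕ) (r : Fin s → ℕ) : Prop where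
  smooth_lam : ∀ i, ContDiffOn ℝ (⊤ : ℕ∞) (lam i) U
  distinct : ∀ i j, i ≠ j → ∀ x ∈ U, lam i x ≠ lam j x
  rho_pos : ∀ i, 1 ≤ ρ i
  riesz : ∀ i, ∀ x ∈ U, eigenDist A (lam i) (ρ i) x = eigenDist A (lam i) (ρ i + 1) x
  rank_const : ∀ i, ∀ x ∈ U, Module.finrank ℝ (eigenDist A (lam i) (ρ i) x) = r i
  direct : ∀ x ∈ U, DirectSum.IsInternal (fun i => eigenDist A (lam i) (ρ i) x)

/-- A distribution `x ↦ 𝒟(x) ⊆ ℝⁿ` is involutive on `U` if the Lie bracket of any two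
smooth vector fields taking values in it again takes values in it. -/
def Involutive {n : ℕ} (U : Set (Vec n)) (D : Vec n → Submodule ℝ (Vec n)) : Prop :=
  ∀ V W : VF n, ContDiffOn ℝ (⊤ : ℕ∞) V U → ContDiffOn ℝ (⊤ : ℕ∞) W U →
    (∀ x ∈ U, V x ∈ D x) → (∀ x ∈ U, W x ∈ D x) →
    ∀ x ∈ U, lieBracket V W x ∈ D x

namespace HaantjesAux

variable {n : ℕ}

/-- N(x) = A(x) − λ(x)·Id. -/
def Nop (A : OpField n) (lam : Vec n → ℝ) : OpField n := fun x => A x - lam x • 1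

/-- The field map V ↦ N V. -/
def NF (A : OpField n) (lam : Vec n → ℝ) (V : VF n) : VF n := fun x => Nop A lam x (V x)

lemma commute_A_Nop (A : OpField n) (lam : Vec n → ℝ) (x : Vec n) :
    Commute (A x) (Nop A lam x) :=
  (Commute.refl (A x)).sub_right ((Commute.one_right (A x)).smul_right (lam x))

lemma mem_eigenDist {A : OpField n} {lam : Vec n → ℝ} {ρ : ℕ} {x v} :
    v ∈ eigenDist A lam ρ x ↔ ((Nop A lam x) ^ ρ) v = 0 := LinearMap.mem_ker

lemma nop_mem (A : OpField n) (lam : Vec n → ℝ) (ρ : ℕ) (x : Vec n) {v : Vec n}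
    (hv : v ∈ eigenDist A lam ρ x) : Nop A lam x v ∈ eigenDist A lam ρ x := by
  rw [mem_eigenDist] at hv ⊢
  have h : ((Nop A lam x) ^ ρ) (Nop A lam x v) = Nop A lam x (((Nop A lam x) ^ ρ) v) := by
    rw [← ContinuousLinearMap.mul_apply, ← ContinuousLinearMap.mul_apply, ← pow_succ, ← pow_succ']
  rw [h, hv, map_zero]

lemma nop_pow_mem (A : OpField n) (lam : Vec n → ℝ) (ρ : ℕ) (x : Vec n) (k : ℕ) {v : Vec n}
    (hv : v ∈ eigenDist A lam ρ x) : ((Nop A lam x) ^ k) v ∈ eigenDist A lam ρ x := by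
  induction k with
  | zero => simpa using hv
  | succ k ih =>
      rw [pow_succ', ContinuousLinearMap.mul_apply]
      exact nop_mem A lam ρ x ih

lemma a_mem (A : OpField n) (lam : Vec n → ℝ) (ρ : ℕ) (x : Vec n) {v : Vec n}
    (hv : v ∈ eigenDist A lam ρ x) : A x v ∈ eigenDist A lam ρ x := by
  rw [mem_eigenDist] at hv ⊢
  have h : ((Nop A lam x) ^ ρ) (A x v) = A x (((Nop A lam x) ^ ρ) v) := by
    rw [← ContinuousLinearMap.mul_apply, ← ContinuousLinearMap.mul_apply,
      ((commute_A_Nop A lam x).pow_right ρ).eq]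
  rw [h, hv, map_zero]

lemma riesz_iter {A : OpField n} {lam : Vec n → ℝ} {ρ : ℕ} {x : Vec n}
    (h : eigenDist A lam ρ x = eigenDist A lam (ρ + 1) x) (j : ℕ) :
    eigenDist A lam (ρ + j) x = eigenDist A lam ρ x := by
  induction j with
  | zero => rfl
  | succ j ih =>
      ext v
      rw [mem_eigenDist, mem_eigenDist]
      constructor
      · intro hv
        have h1 : ((Nop A lam x) ^ (ρ + j)) (Nop A lam x v) = 0 := by
          rw [← ContinuousLinearMap.mul_apply, ← pow_succ]; exact hv
        have h2 : Nop A lam x v ∈ eigenDist A lam ρ x := by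
          rw [← ih]; exact mem_eigenDist.mpr h1
        have h3 : v ∈ eigenDist A lam (ρ + 1) x := by
          rw [mem_eigenDist, pow_succ, ContinuousLinearMap.mul_apply]
          exact mem_eigenDist.mp h2
        rw [← h] at h3
        exact mem_eigenDist.mp h3
      · intro hv
        have : ((Nop A lam x) ^ (ρ + (j+1))) v = ((Nop A lam x) ^ (j+1)) (((Nop A lam x) ^ ρ) v) := by
          rw [← ContinuousLinearMap.mul_apply, ← pow_add, add_comm]
        rw [this, hv, map_zero]

section Smooth

variable {U : Set (Vec n)}

lemma diffAt {F : Type*} [NormedAddCommGroup F] [NormedSpace ℝ F]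
    (hU : IsOpen U) {V : Vec n → F} (hV : ContDiffOn ℝ (⊤ : ℕ∞) V U)
    {x : Vec n} (hx : x ∈ U) : DifferentiableAt ℝ V x :=
  (hV.contDiffAt (hU.mem_nhds hx)).differentiableAt (by simp)

lemma smooth_opApp {A : OpField n} {V : VF n} (hA : ContDiffOn ℝ (⊤ : ℕ∞) A U)
    (hV : ContDiffOn ℝ (⊤ : ℕ∞) V U) : ContDiffOn ℝ (⊤ : ℕ∞) (opApp A V) U :=
  hA.clm_apply hV

lemma smooth_NF {A : OpField n} {lam : Vec n → ℝ} {V : VF n}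
    (hA : ContDiffOn ℝ (⊤ : ℕ∞) A U) (hlam : ContDiffOn ℝ (⊤ : ℕ∞) lam U)
    (hV : ContDiffOn ℝ (⊤ : ℕ∞) V U) : ContDiffOn ℝ (⊤ : ℕ∞) (NF A lam V) U := by
  refine ((hA.clm_apply hV).sub (hlam.smul hV)).congr (fun x _ => ?_)
  simp [NF, Nop, ContinuousLinearMap.sub_apply, ContinuousLinearMap.smul_apply,
    ContinuousLinearMap.one_apply]

lemma smooth_NF_iter {A : OpField n} {lam : Vec n → ℝ} {V : VF n}
    (hA : ContDiffOn ℝ (⊤ : ℕ∞) A U) (hlam : ContDiffOn ℝ (⊤ : ℕ∞) lam U)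
    (hV : ContDiffOn ℝ (⊤ : ℕ∞) V U) (a : ℕ) :
    ContDiffOn ℝ (⊤ : ℕ∞) ((NF A lam)^[a] V) U := by
  induction a with
  | zero => exact hV
  | succ a ih =>
      rw [Function.iterate_succ_apply']
      exact smooth_NF hA hlam ih

end Smooth

lemma NF_iter_apply (A : OpField n) (lam : Vec n → ℝ) (V : VF n) (a : ℕ) (x : Vec n) :
    (NF A lam)^[a] V x = ((Nop A lam x) ^ a) (V x) := by
  induction a generalizing x with
  | zero => simp
  | succ a ih =>
      rw [Function.iterate_succ_apply']
      show Nop A lam x ((NF A lam)^[a] V x) = _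
      rw [ih, pow_succ', ContinuousLinearMap.mul_apply]

lemma sec_NF_iter {U : Set (Vec n)} (A : OpField n) (lam : Vec n → ℝ) (ρ : ℕ) {V : VF n}
    (hsV : ∀ x ∈ U, V x ∈ eigenDist A lam ρ x) (a : ℕ) :
    ∀ x ∈ U, (NF A lam)^[a] V x ∈ eigenDist A lam ρ x := by
  intro x hx
  rw [NF_iter_apply]
  exact nop_pow_mem A lam ρ x a (hsV x hx)

lemma A_apply_eq (A : OpField n) (lam : Vec n → ℝ) (x : Vec n) (v : Vec n) :
    A x v = lam x • v + Nop A lam x v := by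
  simp [Nop, ContinuousLinearMap.sub_apply, ContinuousLinearMap.smul_apply,
    ContinuousLinearMap.one_apply]

lemma opApp_eq (A : OpField n) (lam : Vec n → ℝ) (V : VF n) :
    opApp A V = fun x => lam x • V x + NF A lam V x := by
  funext x; exact A_apply_eq A lam x (V x)

lemma NF_iter_opApp (A : OpField n) (lam : Vec n → ℝ) (V : VF n) (a : ℕ) :
    (NF A lam)^[a] (opApp A V)
      = fun x => lam x • ((NF A lam)^[a] V x) + (NF A lam)^[a+1] V x := by
  funext x
  rw [NF_iter_apply, NF_iter_apply, NF_iter_apply]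
  have hc : ((Nop A lam x) ^ a) (A x (V x)) = A x (((Nop A lam x) ^ a) (V x)) := by
    rw [← ContinuousLinearMap.mul_apply, ← ContinuousLinearMap.mul_apply,
      ((commute_A_Nop A lam x).pow_right a).eq]
  show ((Nop A lam x) ^ a) (A x (V x)) = _
  rw [hc, A_apply_eq A lam x, pow_succ', ContinuousLinearMap.mul_apply]

section Bracket

lemma lieBracket_add_left (V V' W : VF n) (x : Vec n)
    (hV : DifferentiableAt ℝ V x) (hV' : DifferentiableAt ℝ V' x) :
    lieBracket (fun y => V y + V' y) W x = lieBracket V W x + lieBracket V' W x := by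
  unfold lieBracket
  rw [fderiv_fun_add hV hV']
  simp only [map_add, ContinuousLinearMap.add_apply]
  abel

lemma lieBracket_add_right (V W W' : VF n) (x : Vec n)
    (hW : DifferentiableAt ℝ W x) (hW' : DifferentiableAt ℝ W' x) :
    lieBracket V (fun y => W y + W' y) x = lieBracket V W x + lieBracket V W' x := by
  unfold lieBracket
  rw [fderiv_fun_add hW hW']
  simp only [map_add, ContinuousLinearMap.add_apply]
  abel

lemma lieBracket_smul_left (f : Vec n → ℝ) (V W : VF n) (x : Vec n)
    (hf : DifferentiableAt ℝ f x) (hV : DifferentiableAt ℝ V x) :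
    lieBracket (fun y => f y • V y) W x
      = f x • lieBracket V W x - (fderiv ℝ f x (W x)) • V x := by
  unfold lieBracket
  rw [fderiv_fun_smul hf hV]
  simp only [map_smul, ContinuousLinearMap.add_apply, ContinuousLinearMap.smul_apply,
    ContinuousLinearMap.smulRight_apply, smul_sub]
  abel

lemma lieBracket_smul_right (f : Vec n → ℝ) (V W : VF n) (x : Vec n)
    (hf : DifferentiableAt ℝ f x) (hW : DifferentiableAt ℝ W x) :
    lieBracket V (fun y => f y • W y) x
      = f x • lieBracket V W x + (fderiv ℝ f x (V x)) • W x := by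
  unfold lieBracket
  rw [fderiv_fun_smul hf hW]
  simp only [map_smul, ContinuousLinearMap.add_apply, ContinuousLinearMap.smul_apply,
    ContinuousLinearMap.smulRight_apply, smul_sub]
  abel

lemma lieBracket_zero_left {U : Set (Vec n)} (hU : IsOpen U) {Z : VF n}
    (hZ : ∀ y ∈ U, Z y = 0) (W : VF n) {x : Vec n} (hx : x ∈ U) :
    lieBracket Z W x = 0 := by
  have h0 : Z =ᶠ[nhds x] (fun _ => (0 : Vec n)) :=
    Filter.eventuallyEq_of_mem (hU.mem_nhds hx) hZ
  unfold lieBracket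
  rw [h0.fderiv_eq, hZ x hx]
  simp

lemma lieBracket_zero_right {U : Set (Vec n)} (hU : IsOpen U) {Z : VF n}
    (hZ : ∀ y ∈ U, Z y = 0) (W : VF n) {x : Vec n} (hx : x ∈ U) :
    lieBracket W Z x = 0 := by
  have h0 : Z =ᶠ[nhds x] (fun _ => (0 : Vec n)) :=
    Filter.eventuallyEq_of_mem (hU.mem_nhds hx) hZ
  unfold lieBracket
  rw [h0.fderiv_eq, hZ x hx]
  simp

end Bracket

end HaantjesAux

namespace HaantjesAux

variable {n : ℕ} {U : Set (Vec n)}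

lemma NF_iter_zero_on (A : OpField n) (lam : Vec n → ℝ) {X : VF n}
    (hX : ∀ y ∈ U, X y = 0) (c : ℕ) : ∀ y ∈ U, (NF A lam)^[c] X y = 0 := by
  induction c with
  | zero => exact hX
  | succ c ih =>
      intro y hy
      rw [Function.iterate_succ_apply']
      show Nop A lam y ((NF A lam)^[c] X y) = 0
      rw [ih y hy, map_zero]

/-- Admissible pair: smooth sections of the eigen-distribution all of whose
"derived brackets" take values in the distribution. -/
structure Adm (U : Set (Vec n)) (A : OpField n) (lam : Vec n → ℝ) (ρ : ℕ)
    (V W : VF n) : Prop where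
  smV : ContDiffOn ℝ (⊤ : ℕ∞) V U
  smW : ContDiffOn ℝ (⊤ : ℕ∞) W U
  secV : ∀ x ∈ U, V x ∈ eigenDist A lam ρ x
  secW : ∀ x ∈ U, W x ∈ eigenDist A lam ρ x
  good : ∀ a b : ℕ, ¬(a = 0 ∧ b = 0) → ∀ x ∈ U,
    lieBracket ((NF A lam)^[a] V) ((NF A lam)^[b] W) x ∈ eigenDist A lam ρ x

variable {A : OpField n} {lam : Vec n → ℝ} {ρ : ℕ} {V W : VF n}

lemma Adm_opApp_left (hU : IsOpen U) (hA : ContDiffOn ℝ (⊤ : ℕ∞) A U)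
    (hlam : ContDiffOn ℝ (⊤ : ℕ∞) lam U) (adm : Adm U A lam ρ V W) :
    Adm U A lam ρ (opApp A V) W := by
  refine ⟨smooth_opApp hA adm.smV, adm.smW,
    (fun x hx => a_mem A lam ρ x (adm.secV x hx)), adm.secW, ?_⟩
  intro a b hne x hx
  have hda : DifferentiableAt ℝ (fun y => lam y • (NF A lam)^[a] V y) x :=
    diffAt hU (hlam.smul (smooth_NF_iter hA hlam adm.smV a)) hx
  have hda' : DifferentiableAt ℝ ((NF A lam)^[a+1] V) x :=
    diffAt hU (smooth_NF_iter hA hlam adm.smV (a+1)) hx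
  have hdlam : DifferentiableAt ℝ lam x := diffAt hU hlam hx
  have hdV : DifferentiableAt ℝ ((NF A lam)^[a] V) x :=
    diffAt hU (smooth_NF_iter hA hlam adm.smV a) hx
  have key : lieBracket ((NF A lam)^[a] (opApp A V)) ((NF A lam)^[b] W) x
      = (lam x • lieBracket ((NF A lam)^[a] V) ((NF A lam)^[b] W) x
          - (fderiv ℝ lam x ((NF A lam)^[b] W x)) • ((NF A lam)^[a] V x))
        + lieBracket ((NF A lam)^[a+1] V) ((NF A lam)^[b] W) x := by
    rw [NF_iter_opApp A lam V a]
    rw [lieBracket_add_left _ _ _ x hda hda',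
      lieBracket_smul_left _ _ _ x hdlam hdV]
  rw [key]
  exact add_mem
    (sub_mem (Submodule.smul_mem _ _ (adm.good a b hne x hx))
      (Submodule.smul_mem _ _ (sec_NF_iter A lam ρ adm.secV a x hx)))
    (adm.good (a+1) b (by simp) x hx)

lemma Adm_opApp_right (hU : IsOpen U) (hA : ContDiffOn ℝ (⊤ : ℕ∞) A U)
    (hlam : ContDiffOn ℝ (⊤ : ℕ∞) lam U) (adm : Adm U A lam ρ V W) :
    Adm U A lam ρ V (opApp A W) := by
  refine ⟨adm.smV, smooth_opApp hA adm.smW, adm.secV,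
    (fun x hx => a_mem A lam ρ x (adm.secW x hx)), ?_⟩
  intro a b hne x hx
  have hdb : DifferentiableAt ℝ (fun y => lam y • (NF A lam)^[b] W y) x :=
    diffAt hU (hlam.smul (smooth_NF_iter hA hlam adm.smW b)) hx
  have hdb' : DifferentiableAt ℝ ((NF A lam)^[b+1] W) x :=
    diffAt hU (smooth_NF_iter hA hlam adm.smW (b+1)) hx
  have hdlam : DifferentiableAt ℝ lam x := diffAt hU hlam hx
  have hdW : DifferentiableAt ℝ ((NF A lam)^[b] W) x :=
    diffAt hU (smooth_NF_iter hA hlam adm.smW b) hx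
  have key : lieBracket ((NF A lam)^[a] V) ((NF A lam)^[b] (opApp A W)) x
      = (lam x • lieBracket ((NF A lam)^[a] V) ((NF A lam)^[b] W) x
          + (fderiv ℝ lam x ((NF A lam)^[a] V x)) • ((NF A lam)^[b] W x))
        + lieBracket ((NF A lam)^[a] V) ((NF A lam)^[b+1] W) x := by
    rw [NF_iter_opApp A lam W b]
    rw [lieBracket_add_right _ _ _ x hdb hdb',
      lieBracket_smul_right _ _ _ x hdlam hdW]
  rw [key]
  exact add_mem
    (add_mem (Submodule.smul_mem _ _ (adm.good a b hne x hx))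
      (Submodule.smul_mem _ _ (sec_NF_iter A lam ρ adm.secW b x hx)))
    (adm.good a (b+1) (by simp) x hx)

end HaantjesAux

namespace HaantjesAux

variable {n : ℕ} {U : Set (Vec n)} {A : OpField n} {lam : Vec n → ℝ} {ρ : ℕ} {V W : VF n}

lemma good01 (adm : Adm U A lam ρ V W) {x} (hx : x ∈ U) :
    lieBracket V (NF A lam W) x ∈ eigenDist A lam ρ x := by
  simpa using adm.good 0 1 (by simp) x hx

lemma good10 (adm : Adm U A lam ρ V W) {x} (hx : x ∈ U) :
    lieBracket (NF A lam V) W x ∈ eigenDist A lam ρ x := by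
  simpa using adm.good 1 0 (by simp) x hx

lemma good11 (adm : Adm U A lam ρ V W) {x} (hx : x ∈ U) :
    lieBracket (NF A lam V) (NF A lam W) x ∈ eigenDist A lam ρ x := by
  simpa using adm.good 1 1 (by simp) x hx

lemma hbr_right (hU : IsOpen U) (hA : ContDiffOn ℝ (⊤ : ℕ∞) A U)
    (hlam : ContDiffOn ℝ (⊤ : ℕ∞) lam U) (adm : Adm U A lam ρ V W)
    {x} (hx : x ∈ U) :
    lieBracket V (opApp A W) x - lam x • lieBracket V W x ∈ eigenDist A lam ρ x := by
  have hdlam : DifferentiableAt ℝ lam x := diffAt hU hlam hx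
  have hdW : DifferentiableAt ℝ W x := diffAt hU adm.smW hx
  have hd1 : DifferentiableAt ℝ (fun y => lam y • W y) x := diffAt hU (hlam.smul adm.smW) hx
  have hd2 : DifferentiableAt ℝ (NF A lam W) x := diffAt hU (smooth_NF hA hlam adm.smW) hx
  have key : lieBracket V (opApp A W) x
      = (lam x • lieBracket V W x + (fderiv ℝ lam x (V x)) • W x)
        + lieBracket V (NF A lam W) x := by
    rw [opApp_eq A lam W]
    rw [lieBracket_add_right _ _ _ x hd1 hd2, lieBracket_smul_right _ _ _ x hdlam hdW]
  have key2 : lieBracket V (opApp A W) x - lam x • lieBracket V W x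
      = (fderiv ℝ lam x (V x)) • W x + lieBracket V (NF A lam W) x := by
    rw [key]; abel
  rw [key2]
  exact add_mem (Submodule.smul_mem _ _ (adm.secW x hx)) (good01 adm hx)

lemma hbr_left (hU : IsOpen U) (hA : ContDiffOn ℝ (⊤ : ℕ∞) A U)
    (hlam : ContDiffOn ℝ (⊤ : ℕ∞) lam U) (adm : Adm U A lam ρ V W)
    {x} (hx : x ∈ U) :
    lieBracket (opApp A V) W x - lam x • lieBracket V W x ∈ eigenDist A lam ρ x := by
  have hdlam : DifferentiableAt ℝ lam x := diffAt hU hlam hx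
  have hdV : DifferentiableAt ℝ V x := diffAt hU adm.smV hx
  have hd1 : DifferentiableAt ℝ (fun y => lam y • V y) x := diffAt hU (hlam.smul adm.smV) hx
  have hd2 : DifferentiableAt ℝ (NF A lam V) x := diffAt hU (smooth_NF hA hlam adm.smV) hx
  have key : lieBracket (opApp A V) W x
      = (lam x • lieBracket V W x - (fderiv ℝ lam x (W x)) • V x)
        + lieBracket (NF A lam V) W x := by
    rw [opApp_eq A lam V]
    rw [lieBracket_add_left _ _ _ x hd1 hd2, lieBracket_smul_left _ _ _ x hdlam hdV]
  have key2 : lieBracket (opApp A V) W x - lam x • lieBracket V W x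
      = -((fderiv ℝ lam x (W x)) • V x) + lieBracket (NF A lam V) W x := by
    rw [key]; abel
  rw [key2]
  exact add_mem (neg_mem (Submodule.smul_mem _ _ (adm.secV x hx))) (good10 adm hx)

lemma hbr_both (hU : IsOpen U) (hA : ContDiffOn ℝ (⊤ : ℕ∞) A U)
    (hlam : ContDiffOn ℝ (⊤ : ℕ∞) lam U) (adm : Adm U A lam ρ V W)
    {x} (hx : x ∈ U) :
    lieBracket (opApp A V) (opApp A W) x - lam x • lam x • lieBracket V W x
      ∈ eigenDist A lam ρ x := by
  have hdlam : DifferentiableAt ℝ lam x := diffAt hU hlam hx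
  have hdV : DifferentiableAt ℝ V x := diffAt hU adm.smV hx
  have hdW : DifferentiableAt ℝ W x := diffAt hU adm.smW hx
  have hdNV : DifferentiableAt ℝ (NF A lam V) x := diffAt hU (smooth_NF hA hlam adm.smV) hx
  have hd1 : DifferentiableAt ℝ (fun y => lam y • V y) x := diffAt hU (hlam.smul adm.smV) hx
  have hd1W : DifferentiableAt ℝ (fun y => lam y • W y) x := diffAt hU (hlam.smul adm.smW) hx
  have hdNW : DifferentiableAt ℝ (NF A lam W) x := diffAt hU (smooth_NF hA hlam adm.smW) hx
  have step1 : lieBracket (opApp A V) (opApp A W) x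
      = (lam x • lieBracket V (opApp A W) x
          - (fderiv ℝ lam x (opApp A W x)) • V x)
        + lieBracket (NF A lam V) (opApp A W) x := by
    rw [opApp_eq A lam V]
    rw [lieBracket_add_left _ _ _ x hd1 hdNV, lieBracket_smul_left _ _ _ x hdlam hdV]
  have step2 : lieBracket V (opApp A W) x
      = (lam x • lieBracket V W x + (fderiv ℝ lam x (V x)) • W x)
        + lieBracket V (NF A lam W) x := by
    rw [opApp_eq A lam W]
    rw [lieBracket_add_right _ _ _ x hd1W hdNW, lieBracket_smul_right _ _ _ x hdlam hdW]
  have step3 : lieBracket (NF A lam V) (opApp A W) x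
      = (lam x • lieBracket (NF A lam V) W x + (fderiv ℝ lam x (NF A lam V x)) • W x)
        + lieBracket (NF A lam V) (NF A lam W) x := by
    rw [opApp_eq A lam W]
    rw [lieBracket_add_right _ _ _ x hd1W hdNW, lieBracket_smul_right _ _ _ x hdlam hdW]
  have key2 : lieBracket (opApp A V) (opApp A W) x - lam x • lam x • lieBracket V W x
      = (lam x • ((fderiv ℝ lam x (V x)) • W x + lieBracket V (NF A lam W) x)
          - (fderiv ℝ lam x (opApp A W x)) • V x)
        + (lam x • lieBracket (NF A lam V) W x + (fderiv ℝ lam x (NF A lam V x)) • W x)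
        + lieBracket (NF A lam V) (NF A lam W) x := by
    rw [step1, step2, step3]
    simp only [smul_add, smul_sub]
    abel
  rw [key2]
  refine add_mem (add_mem ?_ ?_) (good11 adm hx)
  · exact sub_mem
      (Submodule.smul_mem _ _ (add_mem (Submodule.smul_mem _ _ (adm.secW x hx)) (good01 adm hx)))
      (Submodule.smul_mem _ _ (adm.secV x hx))
  · exact add_mem (Submodule.smul_mem _ _ (good10 adm hx))
      (Submodule.smul_mem _ _ (adm.secW x hx))

lemma lemF (hU : IsOpen U) (hA : ContDiffOn ℝ (⊤ : ℕ∞) A U)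
    (hlam : ContDiffOn ℝ (⊤ : ℕ∞) lam U) :
    ∀ (m : ℕ) (V W : VF n), Adm U A lam ρ V W → ∀ x ∈ U,
      genTorsion A m V W x - ((Nop A lam x) ^ (2*m)) (lieBracket V W x)
        ∈ eigenDist A lam ρ x := by
  intro m
  induction m with
  | zero =>
      intro V W adm x hx
      simp only [genTorsion, Nat.mul_zero, pow_zero, ContinuousLinearMap.one_apply, sub_self]
      exact zero_mem _
  | succ m ih =>
      intro V W adm x hx
      have admL := Adm_opApp_left hU hA hlam adm
      have admR := Adm_opApp_right hU hA hlam adm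
      have admB := Adm_opApp_right hU hA hlam admL
      have h1 := ih V W adm x hx
      have h2 := ih (opApp A V) (opApp A W) admB x hx
      have h3 := ih V (opApp A W) admR x hx
      have h4 := ih (opApp A V) W admL x hx
      have e2 := hbr_both hU hA hlam adm hx
      have e3 := hbr_right hU hA hlam adm hx
      have e4 := hbr_left hU hA hlam adm hx
      have key : genTorsion A (m+1) V W x
            - ((Nop A lam x) ^ (2*(m+1))) (lieBracket V W x)
          = A x (A x (genTorsion A m V W x - ((Nop A lam x) ^ (2*m)) (lieBracket V W x)))
            + ((genTorsion A m (opApp A V) (opApp A W) x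
                - ((Nop A lam x) ^ (2*m)) (lieBracket (opApp A V) (opApp A W) x))
              + ((Nop A lam x) ^ (2*m)) (lieBracket (opApp A V) (opApp A W) x
                  - lam x • lam x • lieBracket V W x))
            - A x ((genTorsion A m V (opApp A W) x
                - ((Nop A lam x) ^ (2*m)) (lieBracket V (opApp A W) x))
              + ((Nop A lam x) ^ (2*m)) (lieBracket V (opApp A W) x
                  - lam x • lieBracket V W x)
              + ((genTorsion A m (opApp A V) W x
                - ((Nop A lam x) ^ (2*m)) (lieBracket (opApp A V) W x))
              + ((Nop A lam x) ^ (2*m)) (lieBracket (opApp A V) W x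
                  - lam x • lieBracket V W x))) := by
        have hpow : ((Nop A lam x) ^ (2*(m+1))) (lieBracket V W x)
            = ((Nop A lam x) ^ 2) (((Nop A lam x) ^ (2*m)) (lieBracket V W x)) := by
          rw [show 2*(m+1) = 2 + 2*m from by ring, pow_add,
            ContinuousLinearMap.mul_apply]
        have hNsq : ∀ z : Vec n, ((Nop A lam x) ^ 2) z
            = A x (A x z) - lam x • (A x z) - lam x • (A x z) + lam x • lam x • z := by
          intro z
          have h2' : ((Nop A lam x) ^ 2) z = Nop A lam x (Nop A lam x z) := by
            rw [pow_two, ContinuousLinearMap.mul_apply]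
          rw [h2']
          simp only [Nop, ContinuousLinearMap.sub_apply, ContinuousLinearMap.smul_apply,
            ContinuousLinearMap.one_apply, map_sub, map_smul, smul_sub]
          abel
        rw [show genTorsion A (m+1) V W x
            = A x (A x (genTorsion A m V W x))
              + genTorsion A m (opApp A V) (opApp A W) x
              - A x (genTorsion A m V (opApp A W) x + genTorsion A m (opApp A V) W x)
            from rfl]
        rw [hpow, hNsq]
        simp only [map_sub, map_add, map_smul]
        abel
      rw [key]
      exact sub_mem
        (add_mem (a_mem _ _ _ _ (a_mem _ _ _ _ h1))
          (add_mem h2 (nop_pow_mem _ _ _ _ _ e2)))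
        (a_mem _ _ _ _ (add_mem (add_mem h3 (nop_pow_mem _ _ _ _ _ e3))
          (add_mem h4 (nop_pow_mem _ _ _ _ _ e4))))

end HaantjesAux

namespace HaantjesAux

lemma main_single {n : ℕ} {U : Set (Vec n)} (hU : IsOpen U)
    (A : OpField n) (lam : Vec n → ℝ) (ρ l : ℕ)
    (hA : ContDiffOn ℝ (⊤ : ℕ∞) A U) (hlam : ContDiffOn ℝ (⊤ : ℕ∞) lam U)
    (hriesz : ∀ x ∈ U, eigenDist A lam ρ x = eigenDist A lam (ρ + 1) x)
    (hvan : ∀ X Y : VF n, ContDiffOn ℝ (⊤ : ℕ∞) X U → ContDiffOn ℝ (⊤ : ℕ∞) Y U →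
      ∀ x ∈ U, genTorsion A l X Y x = 0) :
    ∀ V W : VF n, ContDiffOn ℝ (⊤ : ℕ∞) V U → ContDiffOn ℝ (⊤ : ℕ∞) W U →
      (∀ x ∈ U, V x ∈ eigenDist A lam ρ x) → (∀ x ∈ U, W x ∈ eigenDist A lam ρ x) →
      ∀ x ∈ U, lieBracket V W x ∈ eigenDist A lam ρ x := by
  suffices H : ∀ k : ℕ, ∀ V W : VF n,
      ContDiffOn ℝ (⊤ : ℕ∞) V U → ContDiffOn ℝ (⊤ : ℕ∞) W U →
      (∀ x ∈ U, V x ∈ eigenDist A lam ρ x) → (∀ x ∈ U, W x ∈ eigenDist A lam ρ x) →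
      ∀ a b : ℕ, a + b ≤ k →
      (∀ x ∈ U, (NF A lam)^[a] V x = 0) → (∀ x ∈ U, (NF A lam)^[b] W x = 0) →
      ∀ x ∈ U, lieBracket V W x ∈ eigenDist A lam ρ x by
    intro V W hV hW hsV hsW x hx
    refine H (ρ + ρ) V W hV hW hsV hsW ρ ρ le_rfl ?_ ?_ x hx
    · intro y hy; rw [NF_iter_apply]; exact mem_eigenDist.mp (hsV y hy)
    · intro y hy; rw [NF_iter_apply]; exact mem_eigenDist.mp (hsW y hy)
  intro k
  induction k using Nat.strong_induction_on with
  | _ k IH =>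
    intro V W hV hW hsV hsW a b hab hVa hWb x hx
    -- degenerate cases
    rcases Nat.eq_zero_or_pos a with ha0 | hapos
    · subst ha0
      have hz : ∀ y ∈ U, V y = 0 := hVa
      rw [lieBracket_zero_left hU hz W hx]
      exact zero_mem _
    rcases Nat.eq_zero_or_pos b with hb0 | hbpos
    · subst hb0
      have hz : ∀ y ∈ U, W y = 0 := hWb
      rw [lieBracket_zero_right hU hz V hx]
      exact zero_mem _
    -- goodness from the strong induction hypothesis
    have good : ∀ a' b' : ℕ, ¬(a' = 0 ∧ b' = 0) → ∀ y ∈ U,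
        lieBracket ((NF A lam)^[a'] V) ((NF A lam)^[b'] W) y ∈ eigenDist A lam ρ y := by
      intro a' b' hne y hy
      by_cases ha' : a ≤ a'
      · have hz : ∀ z ∈ U, (NF A lam)^[a'] V z = 0 := by
          intro z hz
          have he : (NF A lam)^[a'] V = (NF A lam)^[a' - a] ((NF A lam)^[a] V) := by
            rw [← Function.iterate_add_apply, Nat.sub_add_cancel ha']
          rw [he]
          exact NF_iter_zero_on A lam hVa (a' - a) z hz
        rw [lieBracket_zero_left hU hz _ hy]
        exact zero_mem _
      · by_cases hb' : b ≤ b'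
        · have hz : ∀ z ∈ U, (NF A lam)^[b'] W z = 0 := by
            intro z hz
            have he : (NF A lam)^[b'] W = (NF A lam)^[b' - b] ((NF A lam)^[b] W) := by
              rw [← Function.iterate_add_apply, Nat.sub_add_cancel hb']
            rw [he]
            exact NF_iter_zero_on A lam hWb (b' - b) z hz
          rw [lieBracket_zero_right hU hz _ hy]
          exact zero_mem _
        · have hlt : (a - a') + (b - b') < k := by omega
          refine IH _ hlt ((NF A lam)^[a'] V) ((NF A lam)^[b'] W)
            (smooth_NF_iter hA hlam hV a') (smooth_NF_iter hA hlam hW b')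
            (sec_NF_iter A lam ρ hsV a') (sec_NF_iter A lam ρ hsW b')
            (a - a') (b - b') le_rfl ?_ ?_ y hy
          · intro z hz
            rw [← Function.iterate_add_apply, Nat.sub_add_cancel (le_of_not_ge ha')]
            exact hVa z hz
          · intro z hz
            rw [← Function.iterate_add_apply, Nat.sub_add_cancel (le_of_not_ge hb')]
            exact hWb z hz
    have adm : Adm U A lam ρ V W := ⟨hV, hW, hsV, hsW, good⟩
    have hF := lemF hU hA hlam l V W adm x hx
    rw [hvan V W hV hW x hx, zero_sub] at hF
    have hmem : ((Nop A lam x) ^ (2*l)) (lieBracket V W x) ∈ eigenDist A lam ρ x :=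
      (neg_mem_iff).mp hF
    have hzero : ((Nop A lam x) ^ (ρ + 2*l)) (lieBracket V W x) = 0 := by
      rw [pow_add, ContinuousLinearMap.mul_apply]
      exact mem_eigenDist.mp hmem
    have : lieBracket V W x ∈ eigenDist A lam (ρ + 2*l) x := mem_eigenDist.mpr hzero
    rw [riesz_iter (hriesz x hx) (2*l)] at this
    exact this

end HaantjesAux

/-- for pairwise commuting, spectrally regular operator fields K₁,…,K_w
each with vanishing level-l torsion on U (l ≥ 1 common), any intersection
D^{(1)} ∩ ⋯ ∩ D^{(w)} of one chosen generalized eigen-distribution per operator is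
involutive. -/
theorem intersection_eigenDist_involutive {n : ℕ} (U : Set (Vec n)) (hU : IsOpen U)
    (w : ℕ) (K : Fin w → OpField n)
    (hKsm : ∀ α, ContDiffOn ℝ (⊤ : ℕ∞) (K α) U)
    (hcomm : ∀ α β, ∀ x ∈ U, K α x ∘L K β x = K β x ∘L K α x)
    (s : Fin w → ℕ) (lam : (α : Fin w) → Fin (s α) → Vec n → ℝ)
    (ρ r : (α : Fin w) → Fin (s α) → ℕ)
    (hreg : ∀ α, SpectralRegular U (K α) (s α) (lam α) (ρ α) (r α))
    (l : ℕ) (hl : 1 ≤ l)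
    (hvan : ∀ α, ∀ X Y : VF n, ContDiffOn ℝ (⊤ : ℕ∞) X U → ContDiffOn ℝ (⊤ : ℕ∞) Y U →
      ∀ x ∈ U, genTorsion (K α) l X Y x = 0)
    (idx : (α : Fin w) → Fin (s α)) :
    Involutive U (fun x => ⨅ α, eigenDist (K α) (lam α (idx α)) (ρ α (idx α)) x) := by
  intro V W hV hW hVm hWm x hx
  refine Submodule.mem_iInf _ |>.mpr (fun α => ?_)
  refine HaantjesAux.main_single hU (K α) (lam α (idx α)) (ρ α (idx α)) l (hKsm α)
    ((hreg α).smooth_lam (idx α)) ((hreg α).riesz (idx α)) (hvan α)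
    V W hV hW ?_ ?_ x hx
  · intro y hy
    exact (Submodule.mem_iInf _).mp (hVm y hy) α
  · intro y hy
    exact (Submodule.mem_iInf _).mp (hWm y hy) α
end
end

section
/- Let g₁, g₂, g₃ : ℝ⁴ → ℝ, g₄ : ℝ² → ℝ, g₅ : ℝ → ℝ be smooth. On the open set U = {x ∈ ℝ⁷ : x₁ ≠ 0} with coordinates x = (x₁, …, x₇), writing g₁ = g₁(x₁,x₂,x₃,x₄), g₂ = g₂(x₁,x₂,x₃,x₄), g₃ = g₃(x₁,x₂,x₃,x₄), g₄ = g₄(x₅,x₆), g₅ = g₅(x₇), let K be the operator field whose matrix in the standard basis is K(x) = [[g₁, x₁, x₁+g₂, −x₁, x₁, −x₁, x₁], [1, g₅, −g₁+g₅+x₁, g₄−g₅, 0, g₁−g₅−x₁, −1−g₄+g₅], [0, 0, g₁, 0, 0, 0, 0], [1+g₁−g₄, x₁, x₁+g₂, −1−x₁+g₄, x₁, −x₁, x₁], [0, g₁−g₅, g₁+g₃−g₅+1/x₁, −g₁+g₅, g₁, −g₁+g₅−1/x₁, g₁−g₅], [0, 0, x₁, 0, 0, g₁−x₁, 0], [g₁−g₄,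 x₁, x₁+g₂, −1−x₁, x₁, −x₁, 1+x₁+g₄]]. Then the level-4 generalized Nijenhuis torsion of K vanishes identically: τ⁽⁴⁾_K(X,Y)(x) = 0 for all smooth vector fields X, Y on U and all x ∈ U. -/
noncomputable section

/-- The 7×7 matrix of the operator field K from the level-four example, with
g₁,g₂,g₃ = gᵢ(x₁,x₂,x₃,x₄), g₄ = g₄(x₅,x₆), g₅ = g₅(x₇) (coordinates are 0-indexed). -/
noncomputable def Kmat7 (g₁ g₂ g₃ : ℝ × ℝ × ℝ × ℝ → ℝ) (g₄ : ℝ × ℝ → ℝ) (g₅ : ℝ → ℝ)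
    (x : Vec 7) : Matrix (Fin 7) (Fin 7) ℝ :=
  let G1 := g₁ (x 0, x 1, x 2, x 3)
  let G2 := g₂ (x 0, x 1, x 2, x 3)
  let G3 := g₃ (x 0, x 1, x 2, x 3)
  let G4 := g₄ (x 4, x 5)
  let G5 := g₅ (x 6)
  let t := x 0
  !![G1, t, t + G2, -t, t, -t, t;
     1, G5, -G1 + G5 + t, G4 - G5, 0, G1 - G5 - t, -1 - G4 + G5;
     0, 0, G1, 0, 0, 0, 0;
     1 + G1 - G4, t, t + G2, -1 - t + G4, t, -t, t;
     0, G1 - G5, G1 + G3 - G5 + t⁻¹, -G1 + G5, G1, -G1 + G5 - t⁻¹, G1 - G5;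
     0, 0, t, 0, 0, G1 - t, 0;
     G1 - G4, t, t + G2, -1 - t, t, -t, 1 + t + G4]

/-- The operator field on U = {x ∈ ℝ⁷ : x₁ ≠ 0} whose matrix in the standard basis
is `Kmat7`. -/
noncomputable def Kop7 (g₁ g₂ g₃ : ℝ × ℝ × ℝ × ℝ → ℝ) (g₄ : ℝ × ℝ → ℝ) (g₅ : ℝ → ℝ) :
    OpField 7 :=
  fun x => LinearMap.toContinuousLinearMap (Matrix.toLin' (Kmat7 g₁ g₂ g₃ g₄ g₅ x))

/-- pointwise torsion recursion -/
def ptT {n : ℕ} (K : Vec n → Vec n) (N : Vec n → Vec n → Vec n) : ℕ → Vec n → Vec n → Vec n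
  | 0 => N
  | (m+1) => fun u v =>
      K (K (ptT K N m u v)) + ptT K N m (K u) (K v)
      - K (ptT K N m u (K v) + ptT K N m (K u) v)

/-- pointwise Nijenhuis tensor -/
def Nform {n : ℕ} (A : OpField n) (x : Vec n) (u v : Vec n) : Vec n :=
  fderiv ℝ A x (A x u) v - fderiv ℝ A x (A x v) u
    - A x (fderiv ℝ A x u v - fderiv ℝ A x v u)

section generic
variable {n : ℕ} {U : Set (Vec n)} {A : OpField n}

lemma diffAt_of_contDiffOn (hU : IsOpen U) {f : Vec n → Vec n} (hf : ContDiffOn ℝ (⊤:ℕ∞) f U)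
    {x : Vec n} (hx : x ∈ U) : DifferentiableAt ℝ f x :=
  (hf.differentiableOn (by simp)).differentiableAt (hU.mem_nhds hx)

lemma diffAt_op (hU : IsOpen U) (hA : ContDiffOn ℝ (⊤:ℕ∞) A U)
    {x : Vec n} (hx : x ∈ U) : DifferentiableAt ℝ A x :=
  (hA.differentiableOn (by simp)).differentiableAt (hU.mem_nhds hx)

lemma torsion_base (hU : IsOpen U) (hA : ContDiffOn ℝ (⊤:ℕ∞) A U)
    {V W : VF n} (hV : ContDiffOn ℝ (⊤:ℕ∞) V U) (hW : ContDiffOn ℝ (⊤:ℕ∞) W U)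
    {x : Vec n} (hx : x ∈ U) :
    genTorsion A 1 V W x = Nform A x (V x) (W x) := by
  have hAx := diffAt_op hU hA hx
  have hVx := diffAt_of_contDiffOn hU hV hx
  have hWx := diffAt_of_contDiffOn hU hW hx
  have hAVx : DifferentiableAt ℝ (opApp A V) x :=
    diffAt_of_contDiffOn hU (hA.clm_apply hV) hx
  have hAWx : DifferentiableAt ℝ (opApp A W) x :=
    diffAt_of_contDiffOn hU (hA.clm_apply hW) hx
  have eV : fderiv ℝ (opApp A V) x = (A x).comp (fderiv ℝ V x) + (fderiv ℝ A x).flip (V x) :=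
    fderiv_clm_apply hAx hVx
  have eW : fderiv ℝ (opApp A W) x = (A x).comp (fderiv ℝ W x) + (fderiv ℝ A x).flip (W x) :=
    fderiv_clm_apply hAx hWx
  show A x (A x (lieBracket V W x)) + lieBracket (opApp A V) (opApp A W) x
      - A x (lieBracket V (opApp A W) x + lieBracket (opApp A V) W x) = _
  simp only [lieBracket, Nform, opApp, eV, eW, ContinuousLinearMap.add_apply,
    ContinuousLinearMap.comp_apply, ContinuousLinearMap.flip_apply, map_add, map_sub]
  abel

lemma torsion_eq_ptT (hU : IsOpen U) (hA : ContDiffOn ℝ (⊤:ℕ∞) A U) (m : ℕ) :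
    ∀ (V W : VF n), ContDiffOn ℝ (⊤:ℕ∞) V U → ContDiffOn ℝ (⊤:ℕ∞) W U →
      ∀ x ∈ U, genTorsion A (m+1) V W x
        = ptT (fun u => A x u) (Nform A x) m (V x) (W x) := by
  induction m with
  | zero => intro V W hV hW x hx; exact torsion_base hU hA hV hW hx
  | succ m ih =>
    intro V W hV hW x hx
    have hAV : ContDiffOn ℝ (⊤:ℕ∞) (opApp A V) U := hA.clm_apply hV
    have hAW : ContDiffOn ℝ (⊤:ℕ∞) (opApp A W) U := hA.clm_apply hW
    show A x (A x (genTorsion A (m+1) V W x)) + genTorsion A (m+1) (opApp A V) (opApp A W) x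
        - A x (genTorsion A (m+1) V (opApp A W) x + genTorsion A (m+1) (opApp A V) W x) = _
    rw [ih V W hV hW x hx, ih (opApp A V) (opApp A W) hAV hAW x hx,
        ih V (opApp A W) hV hAW x hx, ih (opApp A V) W hAV hW x hx]
    rfl
end generic
section vecl
lemma vec7_0 {α : Type*} (a0 a1 a2 a3 a4 a5 a6 : α) : ![a0,a1,a2,a3,a4,a5,a6] 0 = a0 := rfl
lemma vec7_1 {α : Type*} (a0 a1 a2 a3 a4 a5 a6 : α) : ![a0,a1,a2,a3,a4,a5,a6] 1 = a1 := rfl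
lemma vec7_2 {α : Type*} (a0 a1 a2 a3 a4 a5 a6 : α) : ![a0,a1,a2,a3,a4,a5,a6] 2 = a2 := rfl
lemma vec7_3 {α : Type*} (a0 a1 a2 a3 a4 a5 a6 : α) : ![a0,a1,a2,a3,a4,a5,a6] 3 = a3 := rfl
lemma vec7_4 {α : Type*} (a0 a1 a2 a3 a4 a5 a6 : α) : ![a0,a1,a2,a3,a4,a5,a6] 4 = a4 := rfl
lemma vec7_5 {α : Type*} (a0 a1 a2 a3 a4 a5 a6 : α) : ![a0,a1,a2,a3,a4,a5,a6] 5 = a5 := rfl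
lemma vec7_6 {α : Type*} (a0 a1 a2 a3 a4 a5 a6 : α) : ![a0,a1,a2,a3,a4,a5,a6] 6 = a6 := rfl

lemma vec7_ext {f g : Vec 7} (h0 : f 0 = g 0) (h1 : f 1 = g 1) (h2 : f 2 = g 2)
    (h3 : f 3 = g 3) (h4 : f 4 = g 4) (h5 : f 5 = g 5) (h6 : f 6 = g 6) : f = g := by
  funext i
  fin_cases i
  · exact h0
  · exact h1
  · exact h2
  · exact h3
  · exact h4
  · exact h5
  · exact h6
end vecl
section specific
set_option maxHeartbeats 1000000

/-- component action of K(x) -/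
def Kact (q1 q2 q3 q4 q5 t s : ℝ) (u : Vec 7) : Vec 7 :=
![ q1*u 0 + t*u 1 + (t+q2)*u 2 - t*u 3 + t*u 4 - t*u 5 + t*u 6,
   u 0 + q5*u 1 + (-q1+q5+t)*u 2 + (q4-q5)*u 3 + (q1-q5-t)*u 5 + (-1-q4+q5)*u 6,
   q1*u 2,
   (1+q1-q4)*u 0 + t*u 1 + (t+q2)*u 2 + (-1-t+q4)*u 3 + t*u 4 - t*u 5 + t*u 6,
   (q1-q5)*u 1 + (q1+q3-q5+s)*u 2 + (-q1+q5)*u 3 + q1*u 4 + (-q1+q5-s)*u 5 + (q1-q5)*u 6,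
   t*u 2 + (q1-t)*u 5,
   (q1-q4)*u 0 + t*u 1 + (t+q2)*u 2 + (-1-t)*u 3 + t*u 4 - t*u 5 + (1+t+q4)*u 6 ]

/-- component action of DK(x)(h), with a..e the derivatives of g₁..g₅ in direction h,
h0 = h 0 and w = -((x 0)^2)⁻¹ -/
def Dact (a b c d e h0 w : ℝ) (u : Vec 7) : Vec 7 :=
![ a*u 0 + h0*u 1 + (h0+b)*u 2 - h0*u 3 + h0*u 4 - h0*u 5 + h0*u 6,
   e*u 1 + (-a+e+h0)*u 2 + (d-e)*u 3 + (a-e-h0)*u 5 + (-d+e)*u 6,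
   a*u 2,
   (a-d)*u 0 + h0*u 1 + (h0+b)*u 2 + (-h0+d)*u 3 + h0*u 4 - h0*u 5 + h0*u 6,
   (a-e)*u 1 + (a+c-e+w*h0)*u 2 + (-a+e)*u 3 + a*u 4 + (-a+e-w*h0)*u 5 + (a-e)*u 6,
   h0*u 2 + (a-h0)*u 5,
   (a-d)*u 0 + h0*u 1 + (h0+b)*u 2 - h0*u 3 + h0*u 4 - h0*u 5 + (h0+d)*u 6 ]

def C0' : Matrix (Fin 7) (Fin 7) ℝ :=
!![0,0,0,0,0,0,0; 1,0,0,0,0,0,-1; 0,0,0,0,0,0,0; 1,0,0,-1,0,0,0;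
   0,0,0,0,0,0,0; 0,0,0,0,0,0,0; 0,0,0,-1,0,0,1]
def C1' : Matrix (Fin 7) (Fin 7) ℝ :=
!![1,0,0,0,0,0,0; 0,0,-1,0,0,1,0; 0,0,1,0,0,0,0; 1,0,0,0,0,0,0;
   0,1,1,-1,1,-1,1; 0,0,0,0,0,1,0; 1,0,0,0,0,0,0]
def C2' : Matrix (Fin 7) (Fin 7) ℝ :=
!![0,0,1,0,0,0,0; 0,0,0,0,0,0,0; 0,0,0,0,0,0,0; 0,0,1,0,0,0,0;
   0,0,0,0,0,0,0; 0,0,0,0,0,0,0; 0,0,1,0,0,0,0]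
def C3' : Matrix (Fin 7) (Fin 7) ℝ :=
!![0,0,0,0,0,0,0; 0,0,0,0,0,0,0; 0,0,0,0,0,0,0; 0,0,0,0,0,0,0;
   0,0,1,0,0,0,0; 0,0,0,0,0,0,0; 0,0,0,0,0,0,0]
def C4' : Matrix (Fin 7) (Fin 7) ℝ :=
!![0,0,0,0,0,0,0; 0,0,0,1,0,0,-1; 0,0,0,0,0,0,0; -1,0,0,1,0,0,0;
   0,0,0,0,0,0,0; 0,0,0,0,0,0,0; -1,0,0,0,0,0,1]
def C5' : Matrix (Fin 7) (Fin 7) ℝ :=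
!![0,0,0,0,0,0,0; 0,1,1,-1,0,-1,1; 0,0,0,0,0,0,0; 0,0,0,0,0,0,0;
   0,-1,-1,1,0,1,-1; 0,0,0,0,0,0,0; 0,0,0,0,0,0,0]
def C6' : Matrix (Fin 7) (Fin 7) ℝ :=
!![0,1,1,-1,1,-1,1; 0,0,1,0,0,-1,0; 0,0,0,0,0,0,0; 0,1,1,-1,1,-1,1;
   0,0,0,0,0,0,0; 0,0,1,0,0,-1,0; 0,1,1,-1,1,-1,1]
def C7' : Matrix (Fin 7) (Fin 7) ℝ :=
!![0,0,0,0,0,0,0; 0,0,0,0,0,0,0; 0,0,0,0,0,0,0; 0,0,0,0,0,0,0;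
   0,0,1,0,0,-1,0; 0,0,0,0,0,0,0; 0,0,0,0,0,0,0]

noncomputable def MM (C : Matrix (Fin 7) (Fin 7) ℝ) : Vec 7 →L[ℝ] Vec 7 :=
  LinearMap.toContinuousLinearMap (Matrix.toLin' C)

def F1 (g : ℝ×ℝ×ℝ×ℝ → ℝ) : Vec 7 → ℝ := fun x => g (x 0, x 1, x 2, x 3)
def F4 (g : ℝ×ℝ → ℝ) : Vec 7 → ℝ := fun x => g (x 4, x 5)
def F5 (g : ℝ → ℝ) : Vec 7 → ℝ := fun x => g (x 6)

noncomputable def P0 : Vec 7 →L[ℝ] ℝ := ContinuousLinearMap.proj 0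

variable {g₁ g₂ g₃ : ℝ×ℝ×ℝ×ℝ → ℝ} {g₄ : ℝ×ℝ → ℝ} {g₅ : ℝ → ℝ}

lemma Kop7_decomp (g₁ g₂ g₃ : ℝ×ℝ×ℝ×ℝ → ℝ) (g₄ : ℝ×ℝ → ℝ) (g₅ : ℝ → ℝ) :
    Kop7 g₁ g₂ g₃ g₄ g₅ = fun x =>
      MM C0' + F1 g₁ x • MM C1' + F1 g₂ x • MM C2' + F1 g₃ x • MM C3'
      + F4 g₄ x • MM C4' + F5 g₅ x • MM C5' + x 0 • MM C6' + (x 0)⁻¹ • MM C7' := by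
  funext x
  apply ContinuousLinearMap.ext; intro u
  apply vec7_ext <;>
  · simp only [Kop7, Kmat7, MM, F1, F4, F5, C0', C1', C2', C3', C4', C5', C6', C7',
      ContinuousLinearMap.add_apply, ContinuousLinearMap.smul_apply,
      LinearMap.coe_toContinuousLinearMap', Matrix.toLin'_apply,
      Matrix.mulVec, dotProduct, Fin.sum_univ_seven, Matrix.of_apply,
      Pi.add_apply, Pi.smul_apply, smul_eq_mul,
      vec7_0, vec7_1, vec7_2, vec7_3, vec7_4, vec7_5, vec7_6]
    ring

lemma proj_contDiff (i : Fin 7) : ContDiff ℝ (⊤:ℕ∞) (fun x : Vec 7 => x i) :=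
  (ContinuousLinearMap.proj i : Vec 7 →L[ℝ] ℝ).contDiff

lemma F1_contDiff (hg : ContDiff ℝ (⊤:ℕ∞) g₁) : ContDiff ℝ (⊤:ℕ∞) (F1 g₁) :=
  hg.comp (((proj_contDiff 0).prodMk ((proj_contDiff 1).prodMk
    ((proj_contDiff 2).prodMk (proj_contDiff 3)))))

lemma F4_contDiff (hg : ContDiff ℝ (⊤:ℕ∞) g₄) : ContDiff ℝ (⊤:ℕ∞) (F4 g₄) :=
  hg.comp ((proj_contDiff 4).prodMk (proj_contDiff 5))

lemma F5_contDiff (hg : ContDiff ℝ (⊤:ℕ∞) g₅) : ContDiff ℝ (⊤:ℕ∞) (F5 g₅) :=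
  hg.comp (proj_contDiff 6)

lemma Kop7_contDiffOn (hg₁ : ContDiff ℝ (⊤:ℕ∞) g₁) (hg₂ : ContDiff ℝ (⊤:ℕ∞) g₂)
    (hg₃ : ContDiff ℝ (⊤:ℕ∞) g₃) (hg₄ : ContDiff ℝ (⊤:ℕ∞) g₄) (hg₅ : ContDiff ℝ (⊤:ℕ∞) g₅) :
    ContDiffOn ℝ (⊤:ℕ∞) (Kop7 g₁ g₂ g₃ g₄ g₅) {x : Vec 7 | x 0 ≠ 0} := by
  rw [Kop7_decomp]
  apply ContDiffOn.add
  apply ContDiffOn.add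
  apply ContDiffOn.add
  apply ContDiffOn.add
  apply ContDiffOn.add
  apply ContDiffOn.add
  apply ContDiffOn.add
  · exact contDiffOn_const
  · exact ((F1_contDiff hg₁).contDiffOn).smul contDiffOn_const
  · exact ((F1_contDiff hg₂).contDiffOn).smul contDiffOn_const
  · exact ((F1_contDiff hg₃).contDiffOn).smul contDiffOn_const
  · exact ((F4_contDiff hg₄).contDiffOn).smul contDiffOn_const
  · exact ((F5_contDiff hg₅).contDiffOn).smul contDiffOn_const
  · exact (((proj_contDiff 0).contDiffOn)).smul contDiffOn_const
  · exact (((proj_contDiff 0).contDiffOn).inv (fun x hx => hx)).smul contDiffOn_const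

lemma Kop7_hasFDerivAt (hg₁ : ContDiff ℝ (⊤:ℕ∞) g₁) (hg₂ : ContDiff ℝ (⊤:ℕ∞) g₂)
    (hg₃ : ContDiff ℝ (⊤:ℕ∞) g₃) (hg₄ : ContDiff ℝ (⊤:ℕ∞) g₄) (hg₅ : ContDiff ℝ (⊤:ℕ∞) g₅)
    {x : Vec 7} (hx : x 0 ≠ 0) :
    HasFDerivAt (Kop7 g₁ g₂ g₃ g₄ g₅)
      ((fderiv ℝ (F1 g₁) x).smulRight (MM C1') + (fderiv ℝ (F1 g₂) x).smulRight (MM C2')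
       + (fderiv ℝ (F1 g₃) x).smulRight (MM C3') + (fderiv ℝ (F4 g₄) x).smulRight (MM C4')
       + (fderiv ℝ (F5 g₅) x).smulRight (MM C5') + P0.smulRight (MM C6')
       + ((-((x 0)^2)⁻¹) • P0).smulRight (MM C7')) x := by
  have h1 : HasFDerivAt (F1 g₁) (fderiv ℝ (F1 g₁) x) x :=
    (((F1_contDiff hg₁).differentiable (by simp)) x).hasFDerivAt
  have h2 : HasFDerivAt (F1 g₂) (fderiv ℝ (F1 g₂) x) x :=
    (((F1_contDiff hg₂).differentiable (by simp)) x).hasFDerivAt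
  have h3 : HasFDerivAt (F1 g₃) (fderiv ℝ (F1 g₃) x) x :=
    (((F1_contDiff hg₃).differentiable (by simp)) x).hasFDerivAt
  have h4 : HasFDerivAt (F4 g₄) (fderiv ℝ (F4 g₄) x) x :=
    (((F4_contDiff hg₄).differentiable (by simp)) x).hasFDerivAt
  have h5 : HasFDerivAt (F5 g₅) (fderiv ℝ (F5 g₅) x) x :=
    (((F5_contDiff hg₅).differentiable (by simp)) x).hasFDerivAt
  have h6 : HasFDerivAt (fun x : Vec 7 => x 0) P0 x := P0.hasFDerivAt
  have h7 : HasFDerivAt (fun x : Vec 7 => (x 0)⁻¹) ((-((x 0)^2)⁻¹) • P0) x :=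
    (hasDerivAt_inv hx).comp_hasFDerivAt x h6
  rw [Kop7_decomp]
  exact (((((((h1.smul_const (MM C1')).const_add (MM C0')).add
    (h2.smul_const (MM C2'))).add (h3.smul_const (MM C3'))).add
    (h4.smul_const (MM C4'))).add (h5.smul_const (MM C5'))).add
    (h6.smul_const (MM C6'))).add (h7.smul_const (MM C7'))

lemma fderiv_Kop7_apply (hg₁ : ContDiff ℝ (⊤:ℕ∞) g₁) (hg₂ : ContDiff ℝ (⊤:ℕ∞) g₂)
    (hg₃ : ContDiff ℝ (⊤:ℕ∞) g₃) (hg₄ : ContDiff ℝ (⊤:ℕ∞) g₄) (hg₅ : ContDiff ℝ (⊤:ℕ∞) g₅)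
    {x : Vec 7} (hx : x 0 ≠ 0) (h u : Vec 7) :
    fderiv ℝ (Kop7 g₁ g₂ g₃ g₄ g₅) x h u =
      Dact (fderiv ℝ (F1 g₁) x h) (fderiv ℝ (F1 g₂) x h) (fderiv ℝ (F1 g₃) x h)
        (fderiv ℝ (F4 g₄) x h) (fderiv ℝ (F5 g₅) x h) (h 0) (-((x 0)^2)⁻¹) u := by
  rw [(Kop7_hasFDerivAt hg₁ hg₂ hg₃ hg₄ hg₅ hx).fderiv]
  apply vec7_ext <;>
  · simp only [ContinuousLinearMap.add_apply, ContinuousLinearMap.smulRight_apply,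
      ContinuousLinearMap.smul_apply, Pi.add_apply, Pi.smul_apply, smul_eq_mul,
      MM, C1', C2', C3', C4', C5', C6', C7',
      LinearMap.coe_toContinuousLinearMap', Matrix.toLin'_apply,
      Matrix.mulVec, dotProduct, Fin.sum_univ_seven, Matrix.of_apply, Dact, P0,
      ContinuousLinearMap.proj_apply,
      vec7_0, vec7_1, vec7_2, vec7_3, vec7_4, vec7_5, vec7_6]
    ring

lemma Kop7_apply_eq (x u : Vec 7) :
    Kop7 g₁ g₂ g₃ g₄ g₅ x u
      = Kact (F1 g₁ x) (F1 g₂ x) (F1 g₃ x) (F4 g₄ x) (F5 g₅ x) (x 0) ((x 0)⁻¹) u := by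
  apply vec7_ext <;>
  · simp only [Kop7, Kmat7, F1, F4, F5, Kact,
      LinearMap.coe_toContinuousLinearMap', Matrix.toLin'_apply,
      Matrix.mulVec, dotProduct, Fin.sum_univ_seven, Matrix.of_apply,
      vec7_0, vec7_1, vec7_2, vec7_3, vec7_4, vec7_5, vec7_6]
    ring

end specific
section algebra
set_option maxHeartbeats 4000000
variable (q1 q2 q3 q4 q5 t s w : ℝ) (a b c d e : Vec 7 → ℝ)

lemma ptT_unfold (K : Vec 7 → Vec 7) (N : Vec 7 → Vec 7 → Vec 7) (m : ℕ) (u v : Vec 7) :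
    ptT K N (m+1) u v =
      K (K (ptT K N m u v)) + ptT K N m (K u) (K v)
      - K (ptT K N m u (K v) + ptT K N m (K u) v) := rfl
lemma ptT_one (K : Vec 7 → Vec 7) (N : Vec 7 → Vec 7 → Vec 7) (u v : Vec 7) :
    ptT K N 1 u v = K (K (N u v)) + N (K u) (K v) - K (N u (K v) + N (K u) v) :=
  ptT_unfold K N 0 u v
lemma ptT_two (K : Vec 7 → Vec 7) (N : Vec 7 → Vec 7 → Vec 7) (u v : Vec 7) :
    ptT K N 2 u v = K (K (ptT K N 1 u v)) + ptT K N 1 (K u) (K v)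
      - K (ptT K N 1 u (K v) + ptT K N 1 (K u) v) := ptT_unfold K N 1 u v
lemma ptT_three (K : Vec 7 → Vec 7) (N : Vec 7 → Vec 7 → Vec 7) (u v : Vec 7) :
    ptT K N 3 u v = K (K (ptT K N 2 u v)) + ptT K N 2 (K u) (K v)
      - K (ptT K N 2 u (K v) + ptT K N 2 (K u) v) := ptT_unfold K N 2 u v

/-- pointwise Nijenhuis bilinear form for the explicit operator -/
def NNf (u v : Vec 7) : Vec 7 :=
  Dact (a (Kact q1 q2 q3 q4 q5 t s u)) (b (Kact q1 q2 q3 q4 q5 t s u))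
       (c (Kact q1 q2 q3 q4 q5 t s u)) (d (Kact q1 q2 q3 q4 q5 t s u))
       (e (Kact q1 q2 q3 q4 q5 t s u)) ((Kact q1 q2 q3 q4 q5 t s u) 0) w v
  - Dact (a (Kact q1 q2 q3 q4 q5 t s v)) (b (Kact q1 q2 q3 q4 q5 t s v))
       (c (Kact q1 q2 q3 q4 q5 t s v)) (d (Kact q1 q2 q3 q4 q5 t s v))
       (e (Kact q1 q2 q3 q4 q5 t s v)) ((Kact q1 q2 q3 q4 q5 t s v) 0) w u
  - Kact q1 q2 q3 q4 q5 t s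
      (Dact (a u) (b u) (c u) (d u) (e u) (u 0) w v
       - Dact (a v) (b v) (c v) (d v) (e v) (v 0) w u)

lemma E1 : ∀ u v : Vec 7, NNf q1 q2 q3 q4 q5 t s w a b c d e u v =
![ (-1)*q1*(a u)*(v 0)
      + 1*q1*(a v)*(u 0)
      + (-1)*q1*(b u)*(v 2)
      + 1*q1*(b v)*(u 2)
      + (-1)*q2*(a u)*(v 2)
      + 1*q2*(a v)*(u 2)
      + (-1)*q2*(u 1)*(v 2)
      + 1*q2*(u 2)*(v 1)
      + (-1)*q2*(u 2)*(v 3)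
      + 1*q2*(u 2)*(v 4)
      + (-1)*q2*(u 2)*(v 5)
      + 1*q2*(u 2)*(v 6)
      + 1*q2*(u 3)*(v 2)
      + (-1)*q2*(u 4)*(v 2)
      + 1*q2*(u 5)*(v 2)
      + (-1)*q2*(u 6)*(v 2)
      + (-1)*(a u)*t*(v 1)
      + (-1)*(a u)*t*(v 2)
      + 1*(a u)*t*(v 3)
      + (-1)*(a u)*t*(v 4)
      + 1*(a u)*t*(v 5)
      + (-1)*(a u)*t*(v 6)
      + 1*(a (Kact q1 q2 q3 q4 q5 t s u))*(v 0)
      + 1*(a v)*t*(u 1)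
      + 1*(a v)*t*(u 2)
      + (-1)*(a v)*t*(u 3)
      + 1*(a v)*t*(u 4)
      + (-1)*(a v)*t*(u 5)
      + 1*(a v)*t*(u 6)
      + (-1)*(a (Kact q1 q2 q3 q4 q5 t s v))*(u 0)
      + 1*(b (Kact q1 q2 q3 q4 q5 t s u))*(v 2)
      + (-1)*(b (Kact q1 q2 q3 q4 q5 t s v))*(u 2)
      + (-1)*(c u)*t*(v 2)
      + 1*(c v)*t*(u 2)
      + (-1)*t*(u 0)*(v 2)*w
      + 1*t*(u 0)*(v 5)*w
      + 1*t*(u 2)*(v 0)*w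
      + (-1)*t*(u 5)*(v 0)*w,
   1*q1*(a u)*(v 2)
      + (-1)*q1*(a u)*(v 5)
      + (-1)*q1*(a v)*(u 2)
      + 1*q1*(a v)*(u 5)
      + (-1)*q2*(u 2)*(v 5)
      + 1*q2*(u 5)*(v 2)
      + (-1)*q4*(d u)*(v 3)
      + 1*q4*(d u)*(v 6)
      + 1*q4*(d v)*(u 3)
      + (-1)*q4*(d v)*(u 6)
      + (-1)*q5*(e u)*(v 1)
      + (-1)*q5*(e u)*(v 2)
      + 1*q5*(e u)*(v 3)
      + 1*q5*(e u)*(v 5)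
      + (-1)*q5*(e u)*(v 6)
      + 1*q5*(e v)*(u 1)
      + 1*q5*(e v)*(u 2)
      + (-1)*q5*(e v)*(u 3)
      + (-1)*q5*(e v)*(u 5)
      + 1*q5*(e v)*(u 6)
      + (-1)*(a u)*t*(v 2)
      + 1*(a u)*t*(v 5)
      + (-1)*(a (Kact q1 q2 q3 q4 q5 t s u))*(v 2)
      + 1*(a (Kact q1 q2 q3 q4 q5 t s u))*(v 5)
      + 1*(a v)*t*(u 2)
      + (-1)*(a v)*t*(u 5)
      + 1*(a (Kact q1 q2 q3 q4 q5 t s v))*(u 2)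
      + (-1)*(a (Kact q1 q2 q3 q4 q5 t s v))*(u 5)
      + (-1)*(d u)*(v 0)
      + 1*(d u)*(v 6)
      + 1*(d (Kact q1 q2 q3 q4 q5 t s u))*(v 3)
      + (-1)*(d (Kact q1 q2 q3 q4 q5 t s u))*(v 6)
      + 1*(d v)*(u 0)
      + (-1)*(d v)*(u 6)
      + (-1)*(d (Kact q1 q2 q3 q4 q5 t s v))*(u 3)
      + 1*(d (Kact q1 q2 q3 q4 q5 t s v))*(u 6)
      + 1*(e (Kact q1 q2 q3 q4 q5 t s u))*(v 1)
      + 1*(e (Kact q1 q2 q3 q4 q5 t s u))*(v 2)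
      + (-1)*(e (Kact q1 q2 q3 q4 q5 t s u))*(v 3)
      + (-1)*(e (Kact q1 q2 q3 q4 q5 t s u))*(v 5)
      + 1*(e (Kact q1 q2 q3 q4 q5 t s u))*(v 6)
      + (-1)*(e (Kact q1 q2 q3 q4 q5 t s v))*(u 1)
      + (-1)*(e (Kact q1 q2 q3 q4 q5 t s v))*(u 2)
      + 1*(e (Kact q1 q2 q3 q4 q5 t s v))*(u 3)
      + 1*(e (Kact q1 q2 q3 q4 q5 t s v))*(u 5)
      + (-1)*(e (Kact q1 q2 q3 q4 q5 t s v))*(u 6)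
      + 1*t*(u 0)*(v 2)
      + (-1)*t*(u 0)*(v 5)
      + 1*t*(u 1)*(v 2)
      + (-1)*t*(u 1)*(v 5)
      + (-1)*t*(u 2)*(v 0)
      + (-1)*t*(u 2)*(v 1)
      + 1*t*(u 2)*(v 3)
      + (-1)*t*(u 2)*(v 4)
      + (-1)*t*(u 2)*(v 6)
      + (-1)*t*(u 3)*(v 2)
      + 1*t*(u 3)*(v 5)
      + 1*t*(u 4)*(v 2)
      + (-1)*t*(u 4)*(v 5)
      + 1*t*(u 5)*(v 0)
      + 1*t*(u 5)*(v 1)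
      + (-1)*t*(u 5)*(v 3)
      + 1*t*(u 5)*(v 4)
      + 1*t*(u 5)*(v 6)
      + 1*t*(u 6)*(v 2)
      + (-1)*t*(u 6)*(v 5),
   (-1)*q1*(a u)*(v 2)
      + 1*q1*(a v)*(u 2)
      + 1*(a (Kact q1 q2 q3 q4 q5 t s u))*(v 2)
      + (-1)*(a (Kact q1 q2 q3 q4 q5 t s v))*(u 2),
   (-1)*q1*(a u)*(v 0)
      + 1*q1*(a v)*(u 0)
      + (-1)*q1*(b u)*(v 2)
      + 1*q1*(b v)*(u 2)
      + (-1)*q2*(a u)*(v 2)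
      + 1*q2*(a v)*(u 2)
      + (-1)*q2*(u 1)*(v 2)
      + 1*q2*(u 2)*(v 1)
      + (-1)*q2*(u 2)*(v 3)
      + 1*q2*(u 2)*(v 4)
      + (-1)*q2*(u 2)*(v 5)
      + 1*q2*(u 2)*(v 6)
      + 1*q2*(u 3)*(v 2)
      + (-1)*q2*(u 4)*(v 2)
      + 1*q2*(u 5)*(v 2)
      + (-1)*q2*(u 6)*(v 2)
      + 1*q4*(d u)*(v 0)
      + (-1)*q4*(d u)*(v 3)
      + (-1)*q4*(d v)*(u 0)
      + 1*q4*(d v)*(u 3)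
      + (-1)*(a u)*t*(v 1)
      + (-1)*(a u)*t*(v 2)
      + 1*(a u)*t*(v 3)
      + (-1)*(a u)*t*(v 4)
      + 1*(a u)*t*(v 5)
      + (-1)*(a u)*t*(v 6)
      + 1*(a (Kact q1 q2 q3 q4 q5 t s u))*(v 0)
      + 1*(a v)*t*(u 1)
      + 1*(a v)*t*(u 2)
      + (-1)*(a v)*t*(u 3)
      + 1*(a v)*t*(u 4)
      + (-1)*(a v)*t*(u 5)
      + 1*(a v)*t*(u 6)
      + (-1)*(a (Kact q1 q2 q3 q4 q5 t s v))*(u 0)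
      + 1*(b (Kact q1 q2 q3 q4 q5 t s u))*(v 2)
      + (-1)*(b (Kact q1 q2 q3 q4 q5 t s v))*(u 2)
      + (-1)*(c u)*t*(v 2)
      + 1*(c v)*t*(u 2)
      + (-1)*(d u)*(v 0)
      + 1*(d u)*(v 3)
      + (-1)*(d (Kact q1 q2 q3 q4 q5 t s u))*(v 0)
      + 1*(d (Kact q1 q2 q3 q4 q5 t s u))*(v 3)
      + 1*(d v)*(u 0)
      + (-1)*(d v)*(u 3)
      + 1*(d (Kact q1 q2 q3 q4 q5 t s v))*(u 0)
      + (-1)*(d (Kact q1 q2 q3 q4 q5 t s v))*(u 3)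
      + (-1)*t*(u 0)*(v 2)*w
      + 1*t*(u 0)*(v 5)*w
      + 1*t*(u 2)*(v 0)*w
      + (-1)*t*(u 5)*(v 0)*w,
   (-1)*q1*(a u)*(v 1)
      + (-1)*q1*(a u)*(v 2)
      + 1*q1*(a u)*(v 3)
      + (-1)*q1*(a u)*(v 4)
      + 1*q1*(a u)*(v 5)
      + (-1)*q1*(a u)*(v 6)
      + 1*q1*(a v)*(u 1)
      + 1*q1*(a v)*(u 2)
      + (-1)*q1*(a v)*(u 3)
      + 1*q1*(a v)*(u 4)
      + (-1)*q1*(a v)*(u 5)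
      + 1*q1*(a v)*(u 6)
      + (-1)*q1*(c u)*(v 2)
      + 1*q1*(c v)*(u 2)
      + (-1)*q2*(u 2)*(v 5)*w
      + 1*q2*(u 5)*(v 2)*w
      + (-1)*q3*(a u)*(v 2)
      + 1*q3*(a v)*(u 2)
      + 1*q5*(e u)*(v 1)
      + 1*q5*(e u)*(v 2)
      + (-1)*q5*(e u)*(v 3)
      + (-1)*q5*(e u)*(v 5)
      + 1*q5*(e u)*(v 6)
      + (-1)*q5*(e v)*(u 1)
      + (-1)*q5*(e v)*(u 2)
      + 1*q5*(e v)*(u 3)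
      + 1*q5*(e v)*(u 5)
      + (-1)*q5*(e v)*(u 6)
      + (-1)*(a u)*s*(v 2)
      + 1*(a u)*s*(v 5)
      + 1*(a (Kact q1 q2 q3 q4 q5 t s u))*(v 1)
      + 1*(a (Kact q1 q2 q3 q4 q5 t s u))*(v 2)
      + (-1)*(a (Kact q1 q2 q3 q4 q5 t s u))*(v 3)
      + 1*(a (Kact q1 q2 q3 q4 q5 t s u))*(v 4)
      + (-1)*(a (Kact q1 q2 q3 q4 q5 t s u))*(v 5)
      + 1*(a (Kact q1 q2 q3 q4 q5 t s u))*(v 6)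
      + 1*(a v)*s*(u 2)
      + (-1)*(a v)*s*(u 5)
      + (-1)*(a (Kact q1 q2 q3 q4 q5 t s v))*(u 1)
      + (-1)*(a (Kact q1 q2 q3 q4 q5 t s v))*(u 2)
      + 1*(a (Kact q1 q2 q3 q4 q5 t s v))*(u 3)
      + (-1)*(a (Kact q1 q2 q3 q4 q5 t s v))*(u 4)
      + 1*(a (Kact q1 q2 q3 q4 q5 t s v))*(u 5)
      + (-1)*(a (Kact q1 q2 q3 q4 q5 t s v))*(u 6)
      + 1*(c (Kact q1 q2 q3 q4 q5 t s u))*(v 2)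
      + (-1)*(c (Kact q1 q2 q3 q4 q5 t s v))*(u 2)
      + (-1)*(e (Kact q1 q2 q3 q4 q5 t s u))*(v 1)
      + (-1)*(e (Kact q1 q2 q3 q4 q5 t s u))*(v 2)
      + 1*(e (Kact q1 q2 q3 q4 q5 t s u))*(v 3)
      + 1*(e (Kact q1 q2 q3 q4 q5 t s u))*(v 5)
      + (-1)*(e (Kact q1 q2 q3 q4 q5 t s u))*(v 6)
      + 1*(e (Kact q1 q2 q3 q4 q5 t s v))*(u 1)
      + 1*(e (Kact q1 q2 q3 q4 q5 t s v))*(u 2)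
      + (-1)*(e (Kact q1 q2 q3 q4 q5 t s v))*(u 3)
      + (-1)*(e (Kact q1 q2 q3 q4 q5 t s v))*(u 5)
      + 1*(e (Kact q1 q2 q3 q4 q5 t s v))*(u 6)
      + 1*s*(u 0)*(v 2)
      + (-1)*s*(u 0)*(v 5)
      + (-1)*s*(u 2)*(v 0)
      + 1*s*(u 5)*(v 0)
      + 1*t*(u 1)*(v 2)*w
      + (-1)*t*(u 1)*(v 5)*w
      + (-1)*t*(u 2)*(v 1)*w
      + 1*t*(u 2)*(v 3)*w
      + (-1)*t*(u 2)*(v 4)*w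
      + (-1)*t*(u 2)*(v 6)*w
      + (-1)*t*(u 3)*(v 2)*w
      + 1*t*(u 3)*(v 5)*w
      + 1*t*(u 4)*(v 2)*w
      + (-1)*t*(u 4)*(v 5)*w
      + 1*t*(u 5)*(v 1)*w
      + (-1)*t*(u 5)*(v 3)*w
      + 1*t*(u 5)*(v 4)*w
      + 1*t*(u 5)*(v 6)*w
      + 1*t*(u 6)*(v 2)*w
      + (-1)*t*(u 6)*(v 5)*w,
   (-1)*q1*(a u)*(v 5)
      + 1*q1*(a v)*(u 5)
      + (-1)*q2*(u 2)*(v 5)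
      + 1*q2*(u 5)*(v 2)
      + (-1)*(a u)*t*(v 2)
      + 1*(a u)*t*(v 5)
      + 1*(a (Kact q1 q2 q3 q4 q5 t s u))*(v 5)
      + 1*(a v)*t*(u 2)
      + (-1)*(a v)*t*(u 5)
      + (-1)*(a (Kact q1 q2 q3 q4 q5 t s v))*(u 5)
      + 1*t*(u 0)*(v 2)
      + (-1)*t*(u 0)*(v 5)
      + 1*t*(u 1)*(v 2)
      + (-1)*t*(u 1)*(v 5)
      + (-1)*t*(u 2)*(v 0)
      + (-1)*t*(u 2)*(v 1)
      + 1*t*(u 2)*(v 3)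
      + (-1)*t*(u 2)*(v 4)
      + (-1)*t*(u 2)*(v 6)
      + (-1)*t*(u 3)*(v 2)
      + 1*t*(u 3)*(v 5)
      + 1*t*(u 4)*(v 2)
      + (-1)*t*(u 4)*(v 5)
      + 1*t*(u 5)*(v 0)
      + 1*t*(u 5)*(v 1)
      + (-1)*t*(u 5)*(v 3)
      + 1*t*(u 5)*(v 4)
      + 1*t*(u 5)*(v 6)
      + 1*t*(u 6)*(v 2)
      + (-1)*t*(u 6)*(v 5),
   (-1)*q1*(a u)*(v 0)
      + 1*q1*(a v)*(u 0)
      + (-1)*q1*(b u)*(v 2)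
      + 1*q1*(b v)*(u 2)
      + (-1)*q2*(a u)*(v 2)
      + 1*q2*(a v)*(u 2)
      + (-1)*q2*(u 1)*(v 2)
      + 1*q2*(u 2)*(v 1)
      + (-1)*q2*(u 2)*(v 3)
      + 1*q2*(u 2)*(v 4)
      + (-1)*q2*(u 2)*(v 5)
      + 1*q2*(u 2)*(v 6)
      + 1*q2*(u 3)*(v 2)
      + (-1)*q2*(u 4)*(v 2)
      + 1*q2*(u 5)*(v 2)
      + (-1)*q2*(u 6)*(v 2)
      + 1*q4*(d u)*(v 0)
      + (-1)*q4*(d u)*(v 6)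
      + (-1)*q4*(d v)*(u 0)
      + 1*q4*(d v)*(u 6)
      + (-1)*(a u)*t*(v 1)
      + (-1)*(a u)*t*(v 2)
      + 1*(a u)*t*(v 3)
      + (-1)*(a u)*t*(v 4)
      + 1*(a u)*t*(v 5)
      + (-1)*(a u)*t*(v 6)
      + 1*(a (Kact q1 q2 q3 q4 q5 t s u))*(v 0)
      + 1*(a v)*t*(u 1)
      + 1*(a v)*t*(u 2)
      + (-1)*(a v)*t*(u 3)
      + 1*(a v)*t*(u 4)
      + (-1)*(a v)*t*(u 5)
      + 1*(a v)*t*(u 6)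
      + (-1)*(a (Kact q1 q2 q3 q4 q5 t s v))*(u 0)
      + 1*(b (Kact q1 q2 q3 q4 q5 t s u))*(v 2)
      + (-1)*(b (Kact q1 q2 q3 q4 q5 t s v))*(u 2)
      + (-1)*(c u)*t*(v 2)
      + 1*(c v)*t*(u 2)
      + 1*(d u)*(v 3)
      + (-1)*(d u)*(v 6)
      + (-1)*(d (Kact q1 q2 q3 q4 q5 t s u))*(v 0)
      + 1*(d (Kact q1 q2 q3 q4 q5 t s u))*(v 6)
      + (-1)*(d v)*(u 3)
      + 1*(d v)*(u 6)
      + 1*(d (Kact q1 q2 q3 q4 q5 t s v))*(u 0)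
      + (-1)*(d (Kact q1 q2 q3 q4 q5 t s v))*(u 6)
      + (-1)*t*(u 0)*(v 2)*w
      + 1*t*(u 0)*(v 5)*w
      + 1*t*(u 2)*(v 0)*w
      + (-1)*t*(u 5)*(v 0)*w ] := by
  intro u v
  simp only [NNf]
  apply vec7_ext <;>
  · simp only [Kact, Dact, Pi.add_apply, Pi.sub_apply, Matrix.cons_val_zero, Matrix.cons_val_one, Matrix.head_cons, vec7_0, vec7_1, vec7_2, vec7_3, vec7_4, vec7_5, vec7_6]
    ring

lemma E2 : ∀ u v : Vec 7, ptT (Kact q1 q2 q3 q4 q5 t s) (NNf q1 q2 q3 q4 q5 t s w a b c d e) 1 u v =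
![ 2*q1*(c (Kact q1 q2 q3 q4 q5 t s u))*t*(v 2)
      + (-2)*q1*(c (Kact q1 q2 q3 q4 q5 t s v))*t*(u 2)
      + (-1)*q1^2*(c u)*t*(v 2)
      + 1*q1^2*(c v)*t*(u 2)
      + 2*q2*s*t*(u 2)*(v 5)
      + (-2)*q2*s*t*(u 5)*(v 2)
      + (-2)*q2*t^2*(u 2)*(v 5)*w
      + 2*q2*t^2*(u 5)*(v 2)*w
      + 1*q3*t^2*(u 2)*(v 5)*w
      + (-1)*q3*t^2*(u 5)*(v 2)*w
      + (-1)*(c (Kact q1 q2 q3 q4 q5 t s (Kact q1 q2 q3 q4 q5 t s u)))*t*(v 2)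
      + 1*(c (Kact q1 q2 q3 q4 q5 t s (Kact q1 q2 q3 q4 q5 t s v)))*t*(u 2)
      + (-2)*s*t^2*(u 1)*(v 2)
      + 2*s*t^2*(u 1)*(v 5)
      + 2*s*t^2*(u 2)*(v 1)
      + (-2)*s*t^2*(u 2)*(v 3)
      + 2*s*t^2*(u 2)*(v 4)
      + 2*s*t^2*(u 2)*(v 6)
      + 2*s*t^2*(u 3)*(v 2)
      + (-2)*s*t^2*(u 3)*(v 5)
      + (-2)*s*t^2*(u 4)*(v 2)
      + 2*s*t^2*(u 4)*(v 5)
      + (-2)*s*t^2*(u 5)*(v 1)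
      + 2*s*t^2*(u 5)*(v 3)
      + (-2)*s*t^2*(u 5)*(v 4)
      + (-2)*s*t^2*(u 5)*(v 6)
      + (-2)*s*t^2*(u 6)*(v 2)
      + 2*s*t^2*(u 6)*(v 5)
      + 2*t^3*(u 1)*(v 2)*w
      + (-2)*t^3*(u 1)*(v 5)*w
      + (-2)*t^3*(u 2)*(v 1)*w
      + 2*t^3*(u 2)*(v 3)*w
      + (-2)*t^3*(u 2)*(v 4)*w
      + (-2)*t^3*(u 2)*(v 6)*w
      + (-2)*t^3*(u 3)*(v 2)*w
      + 2*t^3*(u 3)*(v 5)*w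
      + 2*t^3*(u 4)*(v 2)*w
      + (-2)*t^3*(u 4)*(v 5)*w
      + 2*t^3*(u 5)*(v 1)*w
      + (-2)*t^3*(u 5)*(v 3)*w
      + 2*t^3*(u 5)*(v 4)*w
      + 2*t^3*(u 5)*(v 6)*w
      + 2*t^3*(u 6)*(v 2)*w
      + (-2)*t^3*(u 6)*(v 5)*w,
   0,
   0,
   2*q1*(c (Kact q1 q2 q3 q4 q5 t s u))*t*(v 2)
      + (-2)*q1*(c (Kact q1 q2 q3 q4 q5 t s v))*t*(u 2)
      + (-1)*q1^2*(c u)*t*(v 2)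
      + 1*q1^2*(c v)*t*(u 2)
      + 2*q2*s*t*(u 2)*(v 5)
      + (-2)*q2*s*t*(u 5)*(v 2)
      + (-2)*q2*t^2*(u 2)*(v 5)*w
      + 2*q2*t^2*(u 5)*(v 2)*w
      + 1*q3*t^2*(u 2)*(v 5)*w
      + (-1)*q3*t^2*(u 5)*(v 2)*w
      + (-1)*(c (Kact q1 q2 q3 q4 q5 t s (Kact q1 q2 q3 q4 q5 t s u)))*t*(v 2)
      + 1*(c (Kact q1 q2 q3 q4 q5 t s (Kact q1 q2 q3 q4 q5 t s v)))*t*(u 2)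
      + (-2)*s*t^2*(u 1)*(v 2)
      + 2*s*t^2*(u 1)*(v 5)
      + 2*s*t^2*(u 2)*(v 1)
      + (-2)*s*t^2*(u 2)*(v 3)
      + 2*s*t^2*(u 2)*(v 4)
      + 2*s*t^2*(u 2)*(v 6)
      + 2*s*t^2*(u 3)*(v 2)
      + (-2)*s*t^2*(u 3)*(v 5)
      + (-2)*s*t^2*(u 4)*(v 2)
      + 2*s*t^2*(u 4)*(v 5)
      + (-2)*s*t^2*(u 5)*(v 1)
      + 2*s*t^2*(u 5)*(v 3)
      + (-2)*s*t^2*(u 5)*(v 4)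
      + (-2)*s*t^2*(u 5)*(v 6)
      + (-2)*s*t^2*(u 6)*(v 2)
      + 2*s*t^2*(u 6)*(v 5)
      + 2*t^3*(u 1)*(v 2)*w
      + (-2)*t^3*(u 1)*(v 5)*w
      + (-2)*t^3*(u 2)*(v 1)*w
      + 2*t^3*(u 2)*(v 3)*w
      + (-2)*t^3*(u 2)*(v 4)*w
      + (-2)*t^3*(u 2)*(v 6)*w
      + (-2)*t^3*(u 3)*(v 2)*w
      + 2*t^3*(u 3)*(v 5)*w
      + 2*t^3*(u 4)*(v 2)*w
      + (-2)*t^3*(u 4)*(v 5)*w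
      + 2*t^3*(u 5)*(v 1)*w
      + (-2)*t^3*(u 5)*(v 3)*w
      + 2*t^3*(u 5)*(v 4)*w
      + 2*t^3*(u 5)*(v 6)*w
      + 2*t^3*(u 6)*(v 2)*w
      + (-2)*t^3*(u 6)*(v 5)*w,
   (-1)*q3*s*t*(u 2)*(v 5)
      + 1*q3*s*t*(u 5)*(v 2)
      + 1*q3*t^2*(u 2)*(v 5)*w
      + (-1)*q3*t^2*(u 5)*(v 2)*w,
   0,
   2*q1*(c (Kact q1 q2 q3 q4 q5 t s u))*t*(v 2)
      + (-2)*q1*(c (Kact q1 q2 q3 q4 q5 t s v))*t*(u 2)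
      + (-1)*q1^2*(c u)*t*(v 2)
      + 1*q1^2*(c v)*t*(u 2)
      + 2*q2*s*t*(u 2)*(v 5)
      + (-2)*q2*s*t*(u 5)*(v 2)
      + (-2)*q2*t^2*(u 2)*(v 5)*w
      + 2*q2*t^2*(u 5)*(v 2)*w
      + 1*q3*t^2*(u 2)*(v 5)*w
      + (-1)*q3*t^2*(u 5)*(v 2)*w
      + (-1)*(c (Kact q1 q2 q3 q4 q5 t s (Kact q1 q2 q3 q4 q5 t s u)))*t*(v 2)
      + 1*(c (Kact q1 q2 q3 q4 q5 t s (Kact q1 q2 q3 q4 q5 t s v)))*t*(u 2)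
      + (-2)*s*t^2*(u 1)*(v 2)
      + 2*s*t^2*(u 1)*(v 5)
      + 2*s*t^2*(u 2)*(v 1)
      + (-2)*s*t^2*(u 2)*(v 3)
      + 2*s*t^2*(u 2)*(v 4)
      + 2*s*t^2*(u 2)*(v 6)
      + 2*s*t^2*(u 3)*(v 2)
      + (-2)*s*t^2*(u 3)*(v 5)
      + (-2)*s*t^2*(u 4)*(v 2)
      + 2*s*t^2*(u 4)*(v 5)
      + (-2)*s*t^2*(u 5)*(v 1)
      + 2*s*t^2*(u 5)*(v 3)
      + (-2)*s*t^2*(u 5)*(v 4)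
      + (-2)*s*t^2*(u 5)*(v 6)
      + (-2)*s*t^2*(u 6)*(v 2)
      + 2*s*t^2*(u 6)*(v 5)
      + 2*t^3*(u 1)*(v 2)*w
      + (-2)*t^3*(u 1)*(v 5)*w
      + (-2)*t^3*(u 2)*(v 1)*w
      + 2*t^3*(u 2)*(v 3)*w
      + (-2)*t^3*(u 2)*(v 4)*w
      + (-2)*t^3*(u 2)*(v 6)*w
      + (-2)*t^3*(u 3)*(v 2)*w
      + 2*t^3*(u 3)*(v 5)*w
      + 2*t^3*(u 4)*(v 2)*w
      + (-2)*t^3*(u 4)*(v 5)*w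
      + 2*t^3*(u 5)*(v 1)*w
      + (-2)*t^3*(u 5)*(v 3)*w
      + 2*t^3*(u 5)*(v 4)*w
      + 2*t^3*(u 5)*(v 6)*w
      + 2*t^3*(u 6)*(v 2)*w
      + (-2)*t^3*(u 6)*(v 5)*w ] := by
  intro u v
  rw [ptT_one]; rw [E1 q1 q2 q3 q4 q5 t s w a b c d e u v, E1 q1 q2 q3 q4 q5 t s w a b c d e (Kact q1 q2 q3 q4 q5 t s u) (Kact q1 q2 q3 q4 q5 t s v), E1 q1 q2 q3 q4 q5 t s w a b c d e u (Kact q1 q2 q3 q4 q5 t s v), E1 q1 q2 q3 q4 q5 t s w a b c d e (Kact q1 q2 q3 q4 q5 t s u) v]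
  apply vec7_ext <;>
  · simp only [Kact, Dact, Pi.add_apply, Pi.sub_apply, Matrix.cons_val_zero, Matrix.cons_val_one, Matrix.head_cons, vec7_0, vec7_1, vec7_2, vec7_3, vec7_4, vec7_5, vec7_6]
    ring

lemma E3 : ∀ u v : Vec 7, ptT (Kact q1 q2 q3 q4 q5 t s) (NNf q1 q2 q3 q4 q5 t s w a b c d e) 2 u v =
![ (-3)*q3*s*t^3*(u 2)*(v 5)
      + 3*q3*s*t^3*(u 5)*(v 2)
      + 3*q3*t^4*(u 2)*(v 5)*w
      + (-3)*q3*t^4*(u 5)*(v 2)*w,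
   0,
   0,
   (-3)*q3*s*t^3*(u 2)*(v 5)
      + 3*q3*s*t^3*(u 5)*(v 2)
      + 3*q3*t^4*(u 2)*(v 5)*w
      + (-3)*q3*t^4*(u 5)*(v 2)*w,
   0,
   0,
   (-3)*q3*s*t^3*(u 2)*(v 5)
      + 3*q3*s*t^3*(u 5)*(v 2)
      + 3*q3*t^4*(u 2)*(v 5)*w
      + (-3)*q3*t^4*(u 5)*(v 2)*w ] := by
  intro u v
  rw [ptT_two]; rw [E2 q1 q2 q3 q4 q5 t s w a b c d e u v, E2 q1 q2 q3 q4 q5 t s w a b c d e (Kact q1 q2 q3 q4 q5 t s u) (Kact q1 q2 q3 q4 q5 t s v), E2 q1 q2 q3 q4 q5 t s w a b c d e u (Kact q1 q2 q3 q4 q5 t s v), E2 q1 q2 q3 q4 q5 t s w a b c d e (Kact q1 q2 q3 q4 q5 t s u) v]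
  apply vec7_ext <;>
  · simp only [Kact, Dact, Pi.add_apply, Pi.sub_apply, Matrix.cons_val_zero, Matrix.cons_val_one, Matrix.head_cons, vec7_0, vec7_1, vec7_2, vec7_3, vec7_4, vec7_5, vec7_6]
    ring

lemma E4 : ∀ u v : Vec 7,
    ptT (Kact q1 q2 q3 q4 q5 t s) (NNf q1 q2 q3 q4 q5 t s w a b c d e) 3 u v = 0 := by
  intro u v
  rw [ptT_three]
  rw [E3 q1 q2 q3 q4 q5 t s w a b c d e u v, E3 q1 q2 q3 q4 q5 t s w a b c d e (Kact q1 q2 q3 q4 q5 t s u) (Kact q1 q2 q3 q4 q5 t s v), E3 q1 q2 q3 q4 q5 t s w a b c d e u (Kact q1 q2 q3 q4 q5 t s v), E3 q1 q2 q3 q4 q5 t s w a b c d e (Kact q1 q2 q3 q4 q5 t s u) v]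
  apply vec7_ext <;>
  · simp only [Kact, Pi.add_apply, Pi.sub_apply, Pi.zero_apply, Matrix.cons_val_zero, Matrix.cons_val_one, Matrix.head_cons, vec7_0, vec7_1, vec7_2, vec7_3, vec7_4, vec7_5, vec7_6]
    ring

end algebra
/-- the level-4 generalized Nijenhuis torsion of the operator field K
vanishes identically on U = {x ∈ ℝ⁷ : x₁ ≠ 0}. -/
theorem level4_torsion_Kop7_vanishes
    (g₁ g₂ g₃ : ℝ × ℝ × ℝ × ℝ → ℝ) (g₄ : ℝ × ℝ → ℝ) (g₅ : ℝ → ℝ)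
    (hg₁ : ContDiff ℝ (⊤ : ℕ∞) g₁) (hg₂ : ContDiff ℝ (⊤ : ℕ∞) g₂)
    (hg₃ : ContDiff ℝ (⊤ : ℕ∞) g₃) (hg₄ : ContDiff ℝ (⊤ : ℕ∞) g₄)
    (hg₅ : ContDiff ℝ (⊤ : ℕ∞) g₅) :
    ∀ X Y : VF 7,
      ContDiffOn ℝ (⊤ : ℕ∞) X {x : Vec 7 | x 0 ≠ 0} →
      ContDiffOn ℝ (⊤ : ℕ∞) Y {x : Vec 7 | x 0 ≠ 0} →
      ∀ x ∈ {x : Vec 7 | x 0 ≠ 0},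
        genTorsion (Kop7 g₁ g₂ g₃ g₄ g₅) 4 X Y x = 0 := by
  intro X Y hX hY x hx
  have hU : IsOpen {x : Vec 7 | x 0 ≠ 0} := by
    have : {x : Vec 7 | x 0 ≠ 0} = (fun x : Vec 7 => x 0) ⁻¹' ({0}ᶜ) := rfl
    rw [this]; exact (isOpen_compl_singleton).preimage (continuous_apply 0)
  have hx0 : x 0 ≠ 0 := hx
  have hA := Kop7_contDiffOn hg₁ hg₂ hg₃ hg₄ hg₅
  have h4 : genTorsion (Kop7 g₁ g₂ g₃ g₄ g₅) 4 X Y x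
      = ptT (fun u => Kop7 g₁ g₂ g₃ g₄ g₅ x u) (Nform (Kop7 g₁ g₂ g₃ g₄ g₅) x) 3 (X x) (Y x) :=
    torsion_eq_ptT hU hA 3 X Y hX hY x hx
  rw [h4]
  have eK : (fun u => Kop7 g₁ g₂ g₃ g₄ g₅ x u)
      = Kact (F1 g₁ x) (F1 g₂ x) (F1 g₃ x) (F4 g₄ x) (F5 g₅ x) (x 0) ((x 0)⁻¹) :=
    funext (fun u => Kop7_apply_eq x u)
  have eN : Nform (Kop7 g₁ g₂ g₃ g₄ g₅) x
      = NNf (F1 g₁ x) (F1 g₂ x) (F1 g₃ x) (F4 g₄ x) (F5 g₅ x) (x 0) ((x 0)⁻¹) (-((x 0)^2)⁻¹)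
          (fderiv ℝ (F1 g₁) x) (fderiv ℝ (F1 g₂) x) (fderiv ℝ (F1 g₃) x)
          (fderiv ℝ (F4 g₄) x) (fderiv ℝ (F5 g₅) x) := by
    funext u v
    show fderiv ℝ (Kop7 g₁ g₂ g₃ g₄ g₅) x (Kop7 g₁ g₂ g₃ g₄ g₅ x u) v
        - fderiv ℝ (Kop7 g₁ g₂ g₃ g₄ g₅) x (Kop7 g₁ g₂ g₃ g₄ g₅ x v) u
        - Kop7 g₁ g₂ g₃ g₄ g₅ x
            (fderiv ℝ (Kop7 g₁ g₂ g₃ g₄ g₅) x u v - fderiv ℝ (Kop7 g₁ g₂ g₃ g₄ g₅) x v u) = _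
    rw [fderiv_Kop7_apply hg₁ hg₂ hg₃ hg₄ hg₅ hx0,
        fderiv_Kop7_apply hg₁ hg₂ hg₃ hg₄ hg₅ hx0,
        fderiv_Kop7_apply hg₁ hg₂ hg₃ hg₄ hg₅ hx0,
        fderiv_Kop7_apply hg₁ hg₂ hg₃ hg₄ hg₅ hx0,
        Kop7_apply_eq, Kop7_apply_eq, Kop7_apply_eq]
    rfl
  rw [eK, eN]
  exact E4 (F1 g₁ x) (F1 g₂ x) (F1 g₃ x) (F4 g₄ x) (F5 g₅ x) (x 0) ((x 0)⁻¹) (-((x 0)^2)⁻¹)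
    (fderiv ℝ (F1 g₁) x) (fderiv ℝ (F1 g₂) x) (fderiv ℝ (F1 g₃) x)
    (fderiv ℝ (F4 g₄) x) (fderiv ℝ (F5 g₅) x) (X x) (Y x)
end
end
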